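/- arXiv:2503.16809 — 14 statements merged into one kernel-verified Lean document; each statement's English description precedes it below -/
import Mathlib

section
/- Let Z_1, ..., Z_n be exchangeable real-valued random variables, and let Q̂_n(α) denote the empirical α-quantile of Z_1, ..., Z_n (the ⌈nα⌉-th order statistic). Then for any α ∈ (0,1), P(Z_n ≤ Q̂_n(α)) ≥ α. -/
open MeasureTheory Finset
open scoped ENNReal

noncomputable def empQuantile (m : ℕ) (z : Fin m → ℝ) (a : ℝ) : EReal :=
  sInf {q : EReal | a ≤ ((Finset.univ.filter (fun i => (z i : EReal) ≤ q)).card : ℝ) / m}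

section Aux

variable {n : ℕ} {α : ℝ}

private def qS (m : ℕ) (z : Fin m → ℝ) (a : ℝ) : Set EReal :=
  {q : EReal | a ≤ ((Finset.univ.filter (fun i => (z i : EReal) ≤ q)).card : ℝ) / m}

private lemma mem_qS {m : ℕ} {z : Fin m → ℝ} {a : ℝ} {q : EReal} :
    q ∈ qS m z a ↔ a ≤ ((Finset.univ.filter (fun i => (z i : EReal) ≤ q)).card : ℝ) / m :=
  Iff.rfl

private lemma card_div_le {m : ℕ} {z : Fin m → ℝ} {q q' : EReal} (hle : q ≤ q') :
    ((Finset.univ.filter (fun i => (z i : EReal) ≤ q)).card : ℝ) / m ≤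
      ((Finset.univ.filter (fun i => (z i : EReal) ≤ q')).card : ℝ) / m := by
  gcongr

private lemma qS_upper {m : ℕ} {z : Fin m → ℝ} {a : ℝ} {q q' : EReal}
    (hq : q ∈ qS m z a) (hle : q ≤ q') : q' ∈ qS m z a := by
  rw [mem_qS] at hq ⊢
  exact hq.trans (card_div_le hle)

/-- The quantile-defining set contains its infimum. -/
private lemma quantile_mem_qS (z : Fin (n + 1) → ℝ) (h0 : 0 < α) (h1 : α ≤ 1) :
    empQuantile (n + 1) z α ∈ qS (n + 1) z α := by
  classical
  have hmpos : (0 : ℝ) < ((n + 1 : ℕ) : ℝ) := by positivity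
  -- every element of qS dominates some z j with (z j : EReal) ∈ qS
  have key : ∀ q ∈ qS (n + 1) z α,
      ∃ j : Fin (n + 1), (z j : EReal) ∈ qS (n + 1) z α ∧ (z j : EReal) ≤ q := by
    intro q hq
    have hA : (Finset.univ.filter (fun i => (z i : EReal) ≤ q)).Nonempty := by
      rcases Finset.eq_empty_or_nonempty (Finset.univ.filter (fun i => (z i : EReal) ≤ q))
        with he | h
      · rw [mem_qS, he] at hq
        simp at hq
        linarith
      · exact h
    obtain ⟨j, hj, hjmax⟩ :=
      (Finset.univ.filter (fun i => (z i : EReal) ≤ q)).exists_max_image z hA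
    have hjq : (z j : EReal) ≤ q := (Finset.mem_filter.mp hj).2
    refine ⟨j, ?_, hjq⟩
    rw [mem_qS]
    refine (mem_qS.mp hq).trans ?_
    refine div_le_div_of_nonneg_right ?_ (by positivity)
    refine Nat.cast_le.mpr (Finset.card_le_card fun i hi => ?_)
    rw [Finset.mem_filter] at hi ⊢
    exact ⟨hi.1, EReal.coe_le_coe_iff.mpr (hjmax i (Finset.mem_filter.mpr ⟨Finset.mem_univ i, hi.2⟩))⟩
  -- the max of z is in qS
  have hne : (Finset.univ : Finset (Fin (n + 1))).Nonempty := Finset.univ_nonempty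
  have hMmem : ((Finset.univ.sup' hne z : ℝ) : EReal) ∈ qS (n + 1) z α := by
    rw [mem_qS]
    have heq : Finset.univ.filter
        (fun i => (z i : EReal) ≤ ((Finset.univ.sup' hne z : ℝ) : EReal)) = Finset.univ :=
      Finset.filter_true_of_mem fun i _ =>
        EReal.coe_le_coe_iff.mpr (Finset.le_sup' z (Finset.mem_univ i))
    rw [heq]
    simp only [Finset.card_univ, Fintype.card_fin]
    rw [div_self (ne_of_gt hmpos)]
    exact h1
  obtain ⟨j₀, hj₀S, _⟩ := key _ hMmem
  have hTne : ((Finset.univ.filter (fun i => (z i : EReal) ∈ qS (n + 1) z α)).image z).Nonempty :=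
    ⟨z j₀, Finset.mem_image_of_mem z (Finset.mem_filter.mpr ⟨Finset.mem_univ _, hj₀S⟩)⟩
  have hcS : ((((Finset.univ.filter (fun i => (z i : EReal) ∈ qS (n + 1) z α)).image z).min'
      hTne : ℝ) : EReal) ∈ qS (n + 1) z α := by
    obtain ⟨i, hi, hzi⟩ := Finset.mem_image.mp (Finset.min'_mem _ hTne)
    rw [← hzi]
    exact (Finset.mem_filter.mp hi).2
  have hclb : ∀ q ∈ qS (n + 1) z α,
      ((((Finset.univ.filter (fun i => (z i : EReal) ∈ qS (n + 1) z α)).image z).min'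
        hTne : ℝ) : EReal) ≤ q := by
    intro q hq
    obtain ⟨j, hjS, hjq⟩ := key q hq
    refine le_trans ?_ hjq
    exact EReal.coe_le_coe_iff.mpr (Finset.min'_le _ _
      (Finset.mem_image_of_mem z (Finset.mem_filter.mpr ⟨Finset.mem_univ _, hjS⟩)))
  have hQ : empQuantile (n + 1) z α
      = ((((Finset.univ.filter (fun i => (z i : EReal) ∈ qS (n + 1) z α)).image z).min'
        hTne : ℝ) : EReal) :=
    le_antisymm (sInf_le hcS) (le_sInf hclb)
  rw [hQ]
  exact hcS

end Aux

section Aux2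

private lemma empQuantile_comp_perm {m : ℕ} (z : Fin m → ℝ) (a : ℝ) (σ : Equiv.Perm (Fin m)) :
    empQuantile m (fun i => z (σ i)) a = empQuantile m z a := by
  unfold empQuantile
  congr 1
  ext q
  have hcard : (Finset.univ.filter (fun i => (z (σ i) : EReal) ≤ q)).card
      = (Finset.univ.filter (fun i => (z i : EReal) ≤ q)).card := by
    apply Finset.card_bij' (fun i _ => σ i) (fun i _ => σ.symm i)
    · intro i hi
      rw [Finset.mem_filter] at hi ⊢
      exact ⟨Finset.mem_univ _, hi.2⟩
    · intro i hi
      rw [Finset.mem_filter] at hi ⊢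
      refine ⟨Finset.mem_univ _, ?_⟩
      simpa using hi.2
    · intro i _; simp
    · intro i _; simp
  simp [hcard]

private lemma measurable_empQuantile (m : ℕ) (a : ℝ) :
    Measurable (fun v : Fin m → ℝ => empQuantile m v a) := by
  classical
  apply measurable_of_Iio
  intro t
  have hset : (fun v : Fin m → ℝ => empQuantile m v a) ⁻¹' Set.Iio t =
      ⋃ (x : ℚ), ⋃ (_ : ((x : ℝ) : EReal) < t),
        {v : Fin m → ℝ | a ≤
          ((Finset.univ.filter (fun i => (v i : EReal) ≤ ((x : ℝ) : EReal))).card : ℝ) / m} := by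
    ext v
    simp only [Set.mem_preimage, Set.mem_Iio, Set.mem_iUnion, Set.mem_setOf_eq]
    constructor
    · intro h
      obtain ⟨s, hs, hst⟩ := sInf_lt_iff.mp h
      obtain ⟨x, hsx, hxt⟩ := EReal.exists_rat_btwn_of_lt hst
      exact ⟨x, hxt, mem_qS.mp (qS_upper (z := v) hs (le_of_lt hsx))⟩
    · rintro ⟨x, hxt, hxS⟩
      exact lt_of_le_of_lt (sInf_le (mem_qS.mpr hxS)) hxt
  rw [hset]
  refine MeasurableSet.iUnion fun x => MeasurableSet.iUnion fun _ => ?_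
  have hf : Measurable (fun v : Fin m → ℝ =>
      ((Finset.univ.filter (fun i => (v i : EReal) ≤ ((x : ℝ) : EReal))).card : ℝ)) := by
    have heq : ∀ v : Fin m → ℝ,
        ((Finset.univ.filter (fun i => (v i : EReal) ≤ ((x : ℝ) : EReal))).card : ℝ)
        = ∑ i : Fin m, if v i ≤ (x : ℝ) then (1 : ℝ) else 0 := by
      intro v
      simp_rw [EReal.coe_le_coe_iff]
      rw [Finset.card_filter]
      push_cast
      rfl
    simp_rw [heq]
    refine Finset.measurable_sum _ fun i _ => Measurable.ite ?_ measurable_const measurable_const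
    exact measurableSet_le (measurable_pi_apply i) measurable_const
  exact measurableSet_le measurable_const (hf.div_const _)

end Aux2

/-- **Quantile lemma.** If `Z₀,…,Z_n` are exchangeable, then the last of them is
below the empirical `α`-quantile of the whole sample with probability at least `α`. -/
theorem quantile_lemma_lower {Ω : Type*} [MeasurableSpace Ω]
    (μ : Measure Ω) [IsProbabilityMeasure μ] (n : ℕ)
    (Z : Fin (n + 1) → Ω → ℝ) (hZ : ∀ i, Measurable (Z i))
    (hexch : ∀ σ : Equiv.Perm (Fin (n + 1)),
      Measure.map (fun ω i => Z (σ i) ω) μ = Measure.map (fun ω i => Z i ω) μ)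
    (α : ℝ) (hα : α ∈ Set.Ioo (0 : ℝ) 1) :
    ENNReal.ofReal α ≤
      μ {ω | (Z (Fin.last n) ω : EReal) ≤ empQuantile (n + 1) (fun i => Z i ω) α} := by
  classical
  obtain ⟨h0, h1⟩ := hα
  have hV : Measurable (fun ω (i : Fin (n + 1)) => Z i ω) :=
    measurable_pi_lambda _ hZ
  set B : Fin (n + 1) → Set (Fin (n + 1) → ℝ) :=
    fun i => {v | (v i : EReal) ≤ empQuantile (n + 1) v α} with hBdef
  have hB : ∀ i, MeasurableSet (B i) := fun i =>
    measurableSet_le (measurable_coe_real_ereal.comp (measurable_pi_apply i))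
      (measurable_empQuantile (n + 1) α)
  set E : Fin (n + 1) → Set Ω := fun i => (fun ω (j : Fin (n + 1)) => Z j ω) ⁻¹' B i with hEdef
  have hE : ∀ i, MeasurableSet (E i) := fun i => hV (hB i)
  -- all E i have the same measure
  have hEeq : ∀ i, μ (E i) = μ (E (Fin.last n)) := by
    intro i
    set σ := Equiv.swap i (Fin.last n) with hσ
    have hV' : Measurable (fun ω (j : Fin (n + 1)) => Z (σ j) ω) :=
      measurable_pi_lambda _ fun j => hZ _
    have hpre : (fun ω (j : Fin (n + 1)) => Z (σ j) ω) ⁻¹' (B (Fin.last n)) = E i := by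
      ext ω
      simp only [hEdef, hBdef, Set.mem_preimage, Set.mem_setOf_eq]
      rw [empQuantile_comp_perm (fun j => Z j ω) α σ, hσ, Equiv.swap_apply_right]
    calc μ (E i) = μ ((fun ω (j : Fin (n + 1)) => Z (σ j) ω) ⁻¹' (B (Fin.last n))) := by
          rw [hpre]
      _ = Measure.map (fun ω (j : Fin (n + 1)) => Z (σ j) ω) μ (B (Fin.last n)) :=
          (Measure.map_apply hV' (hB _)).symm
      _ = Measure.map (fun ω (j : Fin (n + 1)) => Z j ω) μ (B (Fin.last n)) := by
          rw [hexch σ]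
      _ = μ (E (Fin.last n)) := Measure.map_apply hV (hB _)
  -- sum of the measures equals integral of the count
  have hsum : ∑ i : Fin (n + 1), μ (E i)
      = ∫⁻ ω, ((Finset.univ.filter
          (fun i => (Z i ω : EReal) ≤ empQuantile (n + 1) (fun j => Z j ω) α)).card
        : ℝ≥0∞) ∂μ := by
    have h1' : ∀ i, μ (E i) = ∫⁻ ω, (E i).indicator (fun _ => (1 : ℝ≥0∞)) ω ∂μ := by
      intro i
      rw [lintegral_indicator_const (hE i), one_mul]
    simp_rw [h1']
    rw [← lintegral_finset_sum _ (fun i _ => (measurable_const.indicator (hE i)))]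
    congr 1
    ext ω
    have : ∀ i, (E i).indicator (fun _ => (1 : ℝ≥0∞)) ω
        = if (Z i ω : EReal) ≤ empQuantile (n + 1) (fun j => Z j ω) α then 1 else 0 := by
      intro i
      rw [Set.indicator_apply]
      congr 1
    simp_rw [this]
    rw [Finset.sum_boole]
  -- pointwise lower bound for the count
  have hcount : ∀ ω, ENNReal.ofReal α * ((n + 1 : ℕ) : ℝ≥0∞)
      ≤ ((Finset.univ.filter
          (fun i => (Z i ω : EReal) ≤ empQuantile (n + 1) (fun j => Z j ω) α)).card : ℝ≥0∞) := by
    intro ω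
    have hq := quantile_mem_qS (fun j => Z j ω) h0 (le_of_lt h1)
    rw [mem_qS, le_div_iff₀ (by positivity : (0:ℝ) < ((n + 1 : ℕ) : ℝ))] at hq
    calc ENNReal.ofReal α * ((n + 1 : ℕ) : ℝ≥0∞)
        = ENNReal.ofReal (α * ((n + 1 : ℕ) : ℝ)) := by
          rw [ENNReal.ofReal_mul (le_of_lt h0), ENNReal.ofReal_natCast]
      _ ≤ ENNReal.ofReal (((Finset.univ.filter
          (fun i => (Z i ω : EReal) ≤ empQuantile (n + 1) (fun j => Z j ω) α)).card : ℝ)) :=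
          ENNReal.ofReal_le_ofReal hq
      _ = _ := ENNReal.ofReal_natCast _
  -- put everything together
  have hmain : ENNReal.ofReal α * ((n + 1 : ℕ) : ℝ≥0∞)
      ≤ μ (E (Fin.last n)) * ((n + 1 : ℕ) : ℝ≥0∞) := by
    calc ENNReal.ofReal α * ((n + 1 : ℕ) : ℝ≥0∞)
        = ∫⁻ _, ENNReal.ofReal α * ((n + 1 : ℕ) : ℝ≥0∞) ∂μ := by
          rw [lintegral_const, measure_univ, mul_one]
      _ ≤ ∫⁻ ω, ((Finset.univ.filter
          (fun i => (Z i ω : EReal) ≤ empQuantile (n + 1) (fun j => Z j ω) α)).card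
            : ℝ≥0∞) ∂μ := lintegral_mono hcount
      _ = ∑ i : Fin (n + 1), μ (E i) := hsum.symm
      _ = ∑ _i : Fin (n + 1), μ (E (Fin.last n)) := Finset.sum_congr rfl fun i _ => hEeq i
      _ = μ (E (Fin.last n)) * ((n + 1 : ℕ) : ℝ≥0∞) := by
          rw [Finset.sum_const, Finset.card_univ, Fintype.card_fin, nsmul_eq_mul, mul_comm]
  have hfinal : ENNReal.ofReal α ≤ μ (E (Fin.last n)) :=
    (ENNReal.mul_le_mul_iff_left (by simp) (by simp)).mp hmain
  exact hfinal
end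

section
/- Let Z_1, ..., Z_n be exchangeable real-valued random variables that are almost surely distinct, and let Q̂_n(α) be the empirical α-quantile (the ⌈nα⌉-th order statistic). Then for any α ∈ (0,1), P(Z_n ≤ Q̂_n(α)) ≤ α + 1/n. -/
open MeasureTheory

namespace QuantileAux

open Finset

/-- Rank of index `i`: number of sample points `≤ z i`. -/
noncomputable def rnk {m : ℕ} (z : Fin m → ℝ) (i : Fin m) : ℕ :=
  (univ.filter (fun j => z j ≤ z i)).card

lemma rnk_lt_rnk {m : ℕ} {z : Fin m → ℝ} {i j : Fin m} (h : z i < z j) :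
    rnk z i < rnk z j := by
  apply Finset.card_lt_card
  have hsub : univ.filter (fun l => z l ≤ z i) ⊆ univ.filter (fun l => z l ≤ z j) := by
    intro l hl
    simp only [mem_filter, mem_univ, true_and] at hl ⊢
    exact hl.trans h.le
  rw [Finset.ssubset_iff_of_subset hsub]
  exact ⟨j, by simp, by simp [not_le.mpr h]⟩

lemma one_le_rnk {m : ℕ} (z : Fin m → ℝ) (i : Fin m) : 1 ≤ rnk z i :=
  Finset.card_pos.mpr ⟨i, by simp⟩

lemma rnk_le {m : ℕ} (z : Fin m → ℝ) (i : Fin m) : rnk z i ≤ m := by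
  simpa [rnk] using Finset.card_filter_le univ (fun j => z j ≤ z i)

lemma rnk_injective {m : ℕ} {z : Fin m → ℝ} (hz : Function.Injective z) :
    Function.Injective (rnk z) := by
  intro i j h
  by_contra hne
  rcases lt_or_gt_of_ne (fun hzz => hne (hz hzz)) with hlt | hlt
  · exact absurd h (rnk_lt_rnk hlt).ne
  · exact absurd h.symm (rnk_lt_rnk hlt).ne

lemma rnk_image {m : ℕ} {z : Fin m → ℝ} (hz : Function.Injective z) :
    univ.image (rnk z) = Finset.Icc 1 m := by
  apply Finset.eq_of_subset_of_card_le
  · intro r hr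
    simp only [mem_image] at hr
    obtain ⟨i, _, rfl⟩ := hr
    exact Finset.mem_Icc.mpr ⟨one_le_rnk z i, rnk_le z i⟩
  · rw [Finset.card_image_of_injective _ (rnk_injective hz)]
    simp

lemma card_rnk_le {m : ℕ} {z : Fin m → ℝ} (hz : Function.Injective z) {k : ℕ} (hk : k ≤ m) :
    (univ.filter (fun i => rnk z i ≤ k)).card = k := by
  have h1 : (univ.filter (fun i => rnk z i ≤ k)).image (rnk z)
      = (univ.image (rnk z)).filter (· ≤ k) := by
    ext r
    simp only [mem_image, mem_filter, mem_univ, true_and]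
    constructor
    · rintro ⟨i, hi, rfl⟩; exact ⟨⟨i, rfl⟩, hi⟩
    · rintro ⟨⟨i, rfl⟩, hi⟩; exact ⟨i, hi, rfl⟩
  have h2 := congrArg Finset.card h1
  rw [Finset.card_image_of_injective _ (rnk_injective hz), rnk_image hz] at h2
  rw [h2]
  have h3 : (Finset.Icc 1 m).filter (· ≤ k) = Finset.Icc 1 k := by
    ext r; simp only [mem_filter, Finset.mem_Icc]; omega
  rw [h3]; simp

lemma exists_rnk_eq {m : ℕ} {z : Fin m → ℝ} (hz : Function.Injective z) {k : ℕ}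
    (hk1 : 1 ≤ k) (hkm : k ≤ m) : ∃ i, rnk z i = k := by
  have : k ∈ univ.image (rnk z) := by
    rw [rnk_image hz]; exact Finset.mem_Icc.mpr ⟨hk1, hkm⟩
  simpa [mem_image] using this

lemma card_filter_perm {m : ℕ} (σ : Equiv.Perm (Fin m)) (p : Fin m → Prop) [DecidablePred p] :
    (univ.filter (fun j => p (σ j))).card = (univ.filter p).card := by
  have h : univ.filter (fun j => p (σ j)) = (univ.filter p).map σ.symm.toEmbedding := by
    ext j
    simp [Equiv.symm_apply_eq, eq_comm]
  rw [h, Finset.card_map]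

lemma rnk_measurable {m : ℕ} (i : Fin m) : Measurable (fun v : Fin m → ℝ => rnk v i) := by
  have h : (fun v : Fin m → ℝ => rnk v i)
      = fun v => ∑ j, if v j ≤ v i then 1 else 0 := by
    funext v
    simp only [rnk, Finset.card_filter]
  rw [h]
  exact Finset.measurable_sum _ fun j _ =>
    Measurable.ite (measurableSet_le (measurable_pi_apply j) (measurable_pi_apply i))
      measurable_const measurable_const

lemma le_quantile_imp {m : ℕ} {z : Fin m → ℝ} (hz : Function.Injective z) {α : ℝ} {k : ℕ}
    (hk1 : 1 ≤ k) (hkm : k ≤ m) (hαk : (m : ℝ) * α ≤ k) (i : Fin m)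
    (h : (z i : EReal) ≤ empQuantile m z α) : rnk z i ≤ k := by
  obtain ⟨i₀, hi₀⟩ := exists_rnk_eq hz hk1 hkm
  have hm : 0 < m := hk1.trans hkm
  have hcard : (univ.filter (fun j => ((z j : ℝ) : EReal) ≤ ((z i₀ : ℝ) : EReal))).card = k := by
    rw [← hi₀]
    congr 1
    ext j
    simp [EReal.coe_le_coe_iff, rnk]
  have hmem : ((z i₀ : ℝ) : EReal) ∈
      {q : EReal | α ≤ ((Finset.univ.filter (fun j => (z j : EReal) ≤ q)).card : ℝ) / m} := by
    show α ≤ _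
    rw [hcard, le_div_iff₀ (by positivity : (0:ℝ) < (m : ℝ))]
    linarith
  have hle : empQuantile m z α ≤ ((z i₀ : ℝ) : EReal) := sInf_le hmem
  have hzz : z i ≤ z i₀ := by exact_mod_cast h.trans hle
  have hsub : univ.filter (fun j => z j ≤ z i) ⊆ univ.filter (fun j => z j ≤ z i₀) := by
    intro l hl
    simp only [mem_filter, mem_univ, true_and] at hl ⊢
    exact hl.trans hzz
  calc rnk z i ≤ rnk z i₀ := Finset.card_le_card hsub
    _ = k := hi₀

end QuantileAux

open QuantileAux Finset ENNReal in
/-- **Quantile lemma, upper bound.** If `Z₀,…,Z_n` are exchangeable and almost surely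
distinct, then the last of them is below the empirical `α`-quantile of the whole sample
with probability at most `α + 1/(n+1)`. -/
theorem quantile_lemma_upper {Ω : Type*} [MeasurableSpace Ω]
    (μ : Measure Ω) [IsProbabilityMeasure μ] (n : ℕ)
    (Z : Fin (n + 1) → Ω → ℝ) (hZ : ∀ i, Measurable (Z i))
    (hexch : ∀ σ : Equiv.Perm (Fin (n + 1)),
      Measure.map (fun ω i => Z (σ i) ω) μ = Measure.map (fun ω i => Z i ω) μ)
    (hdist : ∀ i j : Fin (n + 1), i ≠ j → μ {ω | Z i ω = Z j ω} = 0)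
    (α : ℝ) (hα : α ∈ Set.Ioo (0 : ℝ) 1) :
    μ {ω | (Z (Fin.last n) ω : EReal) ≤ empQuantile (n + 1) (fun i => Z i ω) α} ≤
      ENNReal.ofReal (α + 1 / (n + 1)) := by
  classical
  obtain ⟨hα0, hα1⟩ := hα
  set k : ℕ := ⌈((n + 1 : ℕ) : ℝ) * α⌉₊ with hkdef
  have hmpos : (0:ℝ) < ((n + 1 : ℕ) : ℝ) := by positivity
  have hk1 : 1 ≤ k := Nat.ceil_pos.mpr (by positivity)
  have hkm : k ≤ n + 1 := Nat.ceil_le.mpr (by nlinarith)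
  have hαk : ((n + 1 : ℕ) : ℝ) * α ≤ (k : ℝ) := Nat.le_ceil _
  set A : Fin (n + 1) → Set Ω := fun i => {ω | rnk (fun j => Z j ω) i ≤ k} with hA
  set S : Set (Fin (n + 1) → ℝ) := {v | rnk v (Fin.last n) ≤ k} with hS
  have hSm : MeasurableSet S := rnk_measurable (Fin.last n) (measurableSet_Iic (a := k))
  have hF : ∀ σ : Equiv.Perm (Fin (n + 1)), Measurable (fun ω (j : Fin (n + 1)) => Z (σ j) ω) :=
    fun σ => measurable_pi_lambda _ fun j => hZ (σ j)
  have hFid : Measurable (fun ω (j : Fin (n + 1)) => Z j ω) :=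
    measurable_pi_lambda _ fun j => hZ j
  have hAm : ∀ i, MeasurableSet (A i) := by
    intro i
    have h : A i = (fun ω (j : Fin (n + 1)) => Z j ω) ⁻¹' {v | rnk v i ≤ k} := rfl
    rw [h]
    exact hFid (rnk_measurable i (measurableSet_Iic (a := k)))
  -- exchangeability: all A i have the same measure
  have key : ∀ i, μ (A i) = μ (A (Fin.last n)) := by
    intro i
    set σ : Equiv.Perm (Fin (n + 1)) := Equiv.swap (Fin.last n) i with hσ
    have h1 : (fun ω (j : Fin (n + 1)) => Z (σ j) ω) ⁻¹' S = A i := by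
      ext ω
      simp only [Set.mem_preimage, hS, hA, Set.mem_setOf_eq]
      have hσl : σ (Fin.last n) = i := Equiv.swap_apply_left _ _
      have hre : rnk (fun j => Z (σ j) ω) (Fin.last n) = rnk (fun j => Z j ω) i := by
        simp only [rnk, hσl]
        exact card_filter_perm σ (fun j => Z j ω ≤ Z i ω)
      rw [hre]
    have h2 : (fun ω (j : Fin (n + 1)) => Z j ω) ⁻¹' S = A (Fin.last n) := rfl
    calc μ (A i) = μ.map (fun ω (j : Fin (n + 1)) => Z (σ j) ω) S := by
          rw [Measure.map_apply (hF σ) hSm, h1]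
      _ = μ.map (fun ω (j : Fin (n + 1)) => Z j ω) S := by rw [hexch σ]
      _ = μ (A (Fin.last n)) := by rw [Measure.map_apply hFid hSm, h2]
  -- the non-injectivity event is null
  have hD : μ {ω | ¬ Function.Injective fun j : Fin (n + 1) => Z j ω} = 0 := by
    refine measure_mono_null (fun ω hω => ?_)
      (measure_iUnion_null fun i => measure_iUnion_null fun j =>
        measure_iUnion_null fun h => hdist i j h)
    simp only [Set.mem_setOf_eq, Function.Injective, not_forall] at hω
    obtain ⟨i, j, hij, hne⟩ := hω
    exact Set.mem_iUnion.mpr ⟨i, Set.mem_iUnion.mpr ⟨j, Set.mem_iUnion.mpr ⟨hne, hij⟩⟩⟩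
  -- a.e. the indicators sum to k
  have hae : ∀ᵐ ω ∂μ,
      ∑ i : Fin (n + 1), (A i).indicator (fun _ => (1:ℝ≥0∞)) ω = (k : ℝ≥0∞) := by
    rw [ae_iff]
    apply measure_mono_null _ hD
    intro ω hω
    simp only [Set.mem_setOf_eq] at hω ⊢
    intro hinj
    apply hω
    have hcomp : ∑ i : Fin (n + 1), (A i).indicator (fun _ => (1:ℝ≥0∞)) ω
        = ((univ.filter (fun i : Fin (n + 1) => rnk (fun j => Z j ω) i ≤ k)).card : ℝ≥0∞) := by
      rw [Finset.card_filter]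
      push_cast
      apply Finset.sum_congr rfl
      intro i _
      by_cases h : rnk (fun j => Z j ω) i ≤ k <;> simp [Set.indicator, hA, h]
    rw [hcomp, card_rnk_le hinj hkm]
  -- sum of the measures is k
  have hsum : ∑ i : Fin (n + 1), μ (A i) = (k : ℝ≥0∞) := by
    have h1 : ∀ i : Fin (n + 1),
        μ (A i) = ∫⁻ ω, (A i).indicator (fun _ => (1:ℝ≥0∞)) ω ∂μ := by
      intro i; rw [lintegral_indicator (hAm i)]; simp
    calc ∑ i : Fin (n + 1), μ (A i)
        = ∑ i : Fin (n + 1), ∫⁻ ω, (A i).indicator (fun _ => (1:ℝ≥0∞)) ω ∂μ :=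
          Finset.sum_congr rfl fun i _ => h1 i
      _ = ∫⁻ ω, ∑ i : Fin (n + 1), (A i).indicator (fun _ => (1:ℝ≥0∞)) ω ∂μ :=
          (lintegral_finset_sum _ fun i _ => measurable_const.indicator (hAm i)).symm
      _ = ∫⁻ ω, (k : ℝ≥0∞) ∂μ := lintegral_congr_ae hae
      _ = (k : ℝ≥0∞) := by simp
  -- hence μ (A last) = k / (n+1)
  have hlast : μ (A (Fin.last n)) = (k : ℝ≥0∞) / ((n + 1 : ℕ) : ℝ≥0∞) := by
    have hmul : ((n + 1 : ℕ) : ℝ≥0∞) * μ (A (Fin.last n)) = (k : ℝ≥0∞) := by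
      rw [← hsum, Finset.sum_congr rfl fun i _ => key i]
      simp [Finset.sum_const, mul_comm]
    rw [ENNReal.eq_div_iff (by simp) (by simp)]
    exact hmul
  -- conclude
  have hE : {ω | (Z (Fin.last n) ω : EReal) ≤ empQuantile (n + 1) (fun i => Z i ω) α}
      ⊆ A (Fin.last n) ∪ {ω | ¬ Function.Injective fun j : Fin (n + 1) => Z j ω} := by
    intro ω hω
    by_cases hinj : Function.Injective fun j : Fin (n + 1) => Z j ω
    · exact Or.inl (le_quantile_imp hinj hk1 hkm hαk (Fin.last n) hω)
    · exact Or.inr hinj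
  have hfinal : (k : ℝ≥0∞) / ((n + 1 : ℕ) : ℝ≥0∞) ≤ ENNReal.ofReal (α + 1 / (n + 1)) := by
    have hcast : (k : ℝ≥0∞) / ((n + 1 : ℕ) : ℝ≥0∞)
        = ENNReal.ofReal ((k : ℝ) / ((n + 1 : ℕ) : ℝ)) := by
      rw [ENNReal.ofReal_div_of_pos hmpos, ENNReal.ofReal_natCast, ENNReal.ofReal_natCast]
    rw [hcast]
    apply ENNReal.ofReal_le_ofReal
    have hklt : (k : ℝ) < ((n + 1 : ℕ) : ℝ) * α + 1 := Nat.ceil_lt_add_one (by positivity)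
    have hn1 : ((n : ℝ) + 1) = ((n + 1 : ℕ) : ℝ) := by push_cast; ring
    rw [hn1, div_le_iff₀ hmpos]
    have hexp : (α + 1 / ((n + 1 : ℕ) : ℝ)) * ((n + 1 : ℕ) : ℝ) = ((n + 1 : ℕ) : ℝ) * α + 1 := by
      field_simp
    rw [hexp]
    linarith
  calc μ {ω | (Z (Fin.last n) ω : EReal) ≤ empQuantile (n + 1) (fun i => Z i ω) α}
      ≤ μ (A (Fin.last n) ∪ {ω | ¬ Function.Injective fun j : Fin (n + 1) => Z j ω}) :=
        measure_mono hE
    _ ≤ μ (A (Fin.last n)) + μ {ω | ¬ Function.Injective fun j : Fin (n + 1) => Z j ω} :=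
        measure_union_le _ _
    _ = (k : ℝ≥0∞) / ((n + 1 : ℕ) : ℝ≥0∞) := by rw [hlast, hD, add_zero]
    _ ≤ ENNReal.ofReal (α + 1 / (n + 1)) := hfinal
end

section
/- Let Z_1, ..., Z_{n+1} be exchangeable real-valued random variables and let Q̂_n denote the empirical quantile function of the first n of them. Then for any α ∈ (0,1), P(Z_{n+1} ≤ Q̂_n((1 + 1/n)α)) ≥ α. -/
open MeasureTheory
open scoped ENNReal

lemma empQuantile_le_iff {m : ℕ} (hm : 0 < m) (z : Fin m → ℝ) {a : ℝ} (ha : 0 < a) (t : ℝ) :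
    (t : EReal) ≤ empQuantile m z a ↔
      ((Finset.univ.filter (fun i => z i < t)).card : ℝ) < m * a := by
  rw [empQuantile, le_sInf_iff]
  constructor
  · intro h
    by_contra hc
    push_neg at hc
    -- the strict-below set is nonempty
    have hpos : 0 < ((Finset.univ.filter (fun i => z i < t)).card : ℝ) := by
      have : (0:ℝ) < m * a := by positivity
      linarith
    have hne : (Finset.univ.filter (fun i => z i < t)).Nonempty := by
      rw [← Finset.card_pos]
      exact_mod_cast hpos
    set s := (Finset.univ.filter (fun i => z i < t)).image z with hs
    have hsne : s.Nonempty := hne.image z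
    set q : ℝ := s.max' hsne with hq
    have hqlt : q < t := by
      obtain ⟨i, hi, hiq⟩ := Finset.mem_image.mp (s.max'_mem hsne)
      rw [hq, ← hiq]
      exact (Finset.mem_filter.mp hi).2
    have hsub : (Finset.univ.filter (fun i => z i < t)) ⊆
        (Finset.univ.filter (fun i => (z i : EReal) ≤ (q : EReal))) := by
      intro i hi
      simp only [Finset.mem_filter, Finset.mem_univ, true_and] at hi ⊢
      exact_mod_cast s.le_max' (z i) (Finset.mem_image_of_mem z (by simp [hi]))
    have hmem : a ≤ ((Finset.univ.filter (fun i => (z i : EReal) ≤ (q:EReal))).card : ℝ) / m := by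
      rw [le_div_iff₀ (by exact_mod_cast hm)]
      calc a * m ≤ ((Finset.univ.filter (fun i => z i < t)).card : ℝ) := by linarith [hc]
        _ ≤ _ := by exact_mod_cast Finset.card_le_card hsub
    have := h _ hmem
    have : (t:ℝ) ≤ q := by exact_mod_cast this
    linarith
  · intro h q hq
    simp only [Set.mem_setOf_eq] at hq
    by_contra hlt
    push_neg at hlt
    have hsub : (Finset.univ.filter (fun i => (z i : EReal) ≤ q)) ⊆
        (Finset.univ.filter (fun i => z i < t)) := by
      intro i hi
      simp only [Finset.mem_filter, Finset.mem_univ, true_and] at hi ⊢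
      have : (z i : EReal) < (t : EReal) := lt_of_le_of_lt hi hlt
      exact_mod_cast this
    have hcard : ((Finset.univ.filter (fun i => (z i : EReal) ≤ q)).card : ℝ) ≤
        ((Finset.univ.filter (fun i => z i < t)).card : ℝ) := by
      exact_mod_cast Finset.card_le_card hsub
    rw [le_div_iff₀ (by exact_mod_cast hm)] at hq
    nlinarith [hq, hcard, h]

lemma card_rank_lt {m k : ℕ} (hk : k ≤ m) (w : Fin m → ℝ) :
    k ≤ (Finset.univ.filter
      (fun j => (Finset.univ.filter (fun i => w i < w j)).card < k)).card := by
  rcases Nat.eq_zero_or_pos k with hk0 | hk1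
  · simp [hk0]
  have hm : 0 < m := lt_of_lt_of_le hk1 hk
  have hune : (Finset.univ : Finset (Fin m)).Nonempty := by
    simpa [Finset.univ_nonempty_iff] using Fin.pos_iff_nonempty.mp hm
  set S := (Finset.univ.image w).filter
      (fun v => k ≤ (Finset.univ.filter (fun i => w i ≤ v)).card) with hS
  have hSne : S.Nonempty := by
    refine ⟨(Finset.univ.image w).max' (hune.image w), ?_⟩
    rw [Finset.mem_filter]
    refine ⟨(Finset.univ.image w).max'_mem _, ?_⟩
    have : (Finset.univ.filter (fun i => w i ≤ (Finset.univ.image w).max' (hune.image w))) =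
        Finset.univ := by
      apply Finset.filter_true_of_mem
      intro i _
      exact Finset.le_max' _ _ (Finset.mem_image_of_mem w (Finset.mem_univ i))
    rw [this]
    simpa using hk
  set v := S.min' hSne with hv
  have hvS : v ∈ S := S.min'_mem hSne
  have hvcard : k ≤ (Finset.univ.filter (fun i => w i ≤ v)).card :=
    (Finset.mem_filter.mp hvS).2
  refine le_trans hvcard (Finset.card_le_card ?_)
  intro j hj
  simp only [Finset.mem_filter, Finset.mem_univ, true_and] at hj ⊢
  by_contra hc
  push_neg at hc
  have hne : (Finset.univ.filter (fun i => w i < w j)).Nonempty := by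
    rw [← Finset.card_pos]
    exact lt_of_lt_of_le hk1 hc
  set s := (Finset.univ.filter (fun i => w i < w j)).image w with hs
  have hsne : s.Nonempty := hne.image w
  set v' := s.max' hsne with hv'
  have hv'lt : v' < w j := by
    obtain ⟨i, hi, hiq⟩ := Finset.mem_image.mp (s.max'_mem hsne)
    rw [hv', ← hiq]
    exact (Finset.mem_filter.mp hi).2
  have hv'S : v' ∈ S := by
    rw [Finset.mem_filter]
    constructor
    · obtain ⟨i, hi, hiq⟩ := Finset.mem_image.mp (s.max'_mem hsne)
      rw [hv', ← hiq]
      exact Finset.mem_image_of_mem w (Finset.mem_univ i)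
    · refine le_trans hc (Finset.card_le_card ?_)
      intro i hi
      simp only [Finset.mem_filter, Finset.mem_univ, true_and] at hi ⊢
      exact s.le_max' (w i) (Finset.mem_image_of_mem w (by simp [hi]))
  have h1 := S.min'_le v' hv'S
  rw [← hv] at h1
  have h2 : v' < v := lt_of_lt_of_le hv'lt hj
  linarith

lemma card_filter_castSucc {n : ℕ} (p : Fin (n+1) → Prop) [DecidablePred p]
    (hp : ¬ p (Fin.last n)) :
    (Finset.univ.filter p).card = (Finset.univ.filter (fun i : Fin n => p i.castSucc)).card := by
  rw [Finset.card_filter, Finset.card_filter, Fin.sum_univ_castSucc]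
  simp [hp]

lemma card_filter_comp_perm {m : ℕ} (σ : Equiv.Perm (Fin m)) (p : Fin m → Prop)
    [DecidablePred p] :
    (Finset.univ.filter (fun i => p (σ i))).card = (Finset.univ.filter p).card := by
  apply Finset.card_bij (fun i _ => σ i)
  · intro a ha; simp_all
  · intro a _ b _ h; exact σ.injective h
  · intro b hb; exact ⟨σ.symm b, by simp_all, by simp⟩

/-- **Quantile inflation, lower bound.** If `Z₁,…,Z_{n+1}` are exchangeable, then
`P(Z_{n+1} ≤ Q̂_n((1 + 1/n)α)) ≥ α`, where `Q̂_n` is the empirical quantile of the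
first `n` variables. -/
theorem quantile_inflation_lower {Ω : Type*} [MeasurableSpace Ω]
    (μ : Measure Ω) [IsProbabilityMeasure μ] (n : ℕ) (hn : 0 < n)
    (Z : Fin (n + 1) → Ω → ℝ) (hZ : ∀ i, Measurable (Z i))
    (hexch : ∀ σ : Equiv.Perm (Fin (n + 1)),
      Measure.map (fun ω i => Z (σ i) ω) μ = Measure.map (fun ω i => Z i ω) μ)
    (α : ℝ) (hα : α ∈ Set.Ioo (0 : ℝ) 1) :
    ENNReal.ofReal α ≤
      μ {ω | (Z (Fin.last n) ω : EReal) ≤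
        empQuantile n (fun i : Fin n => Z i.castSucc ω) ((1 + 1 / n) * α)} := by
  classical
  obtain ⟨hα0, hα1⟩ := hα
  have hn' : (0:ℝ) < n := by exact_mod_cast hn
  set k := ⌈((n:ℝ) + 1) * α⌉₊ with hkdef
  have hk_le : k ≤ n + 1 := by
    rw [hkdef]
    apply Nat.ceil_le.mpr
    push_cast
    nlinarith
  set g : Fin (n+1) → Ω → ℕ :=
    fun j ω => (Finset.univ.filter (fun i => Z i ω < Z j ω)).card with hg
  have hgm : ∀ j, Measurable (g j) := by
    intro j
    have h : g j = fun ω => ∑ i : Fin (n+1), if Z i ω < Z j ω then 1 else 0 :=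
      funext (fun ω => Finset.card_filter _ _)
    rw [h]
    exact Finset.measurable_sum _ (fun i _ =>
      Measurable.ite (measurableSet_lt (hZ i) (hZ j)) measurable_const measurable_const)
  set B : Fin (n+1) → Set Ω := fun j => {ω | g j ω < k} with hB
  have hBm : ∀ j, MeasurableSet (B j) := by
    intro j
    have h : B j = (g j) ⁻¹' (Set.Iio k) := rfl
    rw [h]
    exact (hgm j) (Set.finite_Iio k).measurableSet
  -- the event coincides with B (Fin.last n)
  have hE : {ω | (Z (Fin.last n) ω : EReal) ≤
        empQuantile n (fun i : Fin n => Z i.castSucc ω) ((1 + 1 / n) * α)} = B (Fin.last n) := by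
    ext ω
    simp only [hB, Set.mem_setOf_eq]
    rw [empQuantile_le_iff hn _ (mul_pos (by positivity) hα0)]
    have harith : (n:ℝ) * ((1 + 1/n) * α) = ((n:ℝ)+1) * α := by
      field_simp
    rw [harith]
    have hcount : g (Fin.last n) ω
        = (Finset.univ.filter (fun i : Fin n => Z i.castSucc ω < Z (Fin.last n) ω)).card := by
      simp only [hg]
      exact card_filter_castSucc (fun i => Z i ω < Z (Fin.last n) ω) (by simp)
    rw [← hcount, hkdef]
    exact (Nat.lt_ceil).symm
  -- exchangeability: all B j have equal measure
  set S : Set (Fin (n+1) → ℝ) :=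
    {v | (Finset.univ.filter (fun i => v i < v (Fin.last n))).card < k} with hSdef
  have hSm : MeasurableSet S := by
    have hm2 : Measurable (fun v : Fin (n+1) → ℝ =>
        (Finset.univ.filter (fun i => v i < v (Fin.last n))).card) := by
      have h : (fun v : Fin (n+1) → ℝ =>
          (Finset.univ.filter (fun i => v i < v (Fin.last n))).card)
          = fun v => ∑ i : Fin (n+1), if v i < v (Fin.last n) then 1 else 0 :=
        funext (fun v => Finset.card_filter _ _)
      rw [h]
      exact Finset.measurable_sum _ (fun i _ =>
        Measurable.ite (measurableSet_lt (measurable_pi_apply i) (measurable_pi_apply _))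
          measurable_const measurable_const)
    have h : S = (fun v : Fin (n+1) → ℝ =>
        (Finset.univ.filter (fun i => v i < v (Fin.last n))).card) ⁻¹' (Set.Iio k) := rfl
    rw [h]
    exact hm2 (Set.finite_Iio k).measurableSet
  have hFm : Measurable (fun ω i => Z i ω) := measurable_pi_lambda _ hZ
  have hBeq : ∀ j, μ (B j) = μ (B (Fin.last n)) := by
    intro j
    set σ := Equiv.swap j (Fin.last n) with hσ
    have hσm : Measurable (fun ω i => Z (σ i) ω) := measurable_pi_lambda _ (fun i => hZ _)
    have h1 : B j = (fun ω i => Z (σ i) ω) ⁻¹' S := by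
      ext ω
      simp only [hB, hSdef, Set.mem_setOf_eq, Set.mem_preimage, hg]
      have heq : (Finset.univ.filter (fun i => Z (σ i) ω < Z (σ (Fin.last n)) ω)).card
          = (Finset.univ.filter (fun i => Z i ω < Z j ω)).card := by
        rw [Equiv.swap_apply_right]
        exact card_filter_comp_perm σ (fun i => Z i ω < Z j ω)
      rw [heq]
    have h2 : B (Fin.last n) = (fun ω i => Z i ω) ⁻¹' S := by
      ext ω
      simp only [hB, hSdef, Set.mem_setOf_eq, Set.mem_preimage, hg]
    rw [h1, h2, ← Measure.map_apply hσm hSm, ← Measure.map_apply hFm hSm, hexch σ]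
  -- sum of measures is at least k
  have hsum : ((k : ℝ≥0∞)) ≤ ∑ j : Fin (n+1), μ (B j) := by
    have h1 : ∀ j : Fin (n+1), μ (B j)
        = ∫⁻ ω, (B j).indicator (fun _ => (1:ℝ≥0∞)) ω ∂μ := by
      intro j; rw [lintegral_indicator (hBm j)]; simp
    simp_rw [h1]
    rw [← lintegral_finset_sum _ (fun j _ => (measurable_const.indicator (hBm j)))]
    have h2 : ∀ ω, (k : ℝ≥0∞) ≤ ∑ j : Fin (n+1), (B j).indicator (fun _ => (1:ℝ≥0∞)) ω := by
      intro ω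
      have hrank : k ≤ (Finset.univ.filter (fun j => g j ω < k)).card := by
        simpa [hg] using card_rank_lt hk_le (fun j => Z j ω)
      have heq : ∑ j : Fin (n+1), (B j).indicator (fun _ => (1:ℝ≥0∞)) ω
          = ((Finset.univ.filter (fun j => g j ω < k)).card : ℝ≥0∞) := by
        rw [Finset.card_filter]
        push_cast
        apply Finset.sum_congr rfl
        intro j _
        simp [Set.indicator_apply, hB]
      rw [heq]
      exact_mod_cast hrank
    calc (k:ℝ≥0∞) = ∫⁻ _, (k:ℝ≥0∞) ∂μ := by simp
      _ ≤ _ := lintegral_mono h2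
  have hconst : ∑ j : Fin (n+1), μ (B j) = ((n:ℝ≥0∞)+1) * μ (B (Fin.last n)) := by
    calc ∑ j : Fin (n+1), μ (B j) = ∑ _j : Fin (n+1), μ (B (Fin.last n)) :=
          Finset.sum_congr rfl (fun j _ => hBeq j)
      _ = ((n:ℝ≥0∞)+1) * μ (B (Fin.last n)) := by
          rw [Finset.sum_const]
          simp [nsmul_eq_mul]
  rw [hconst] at hsum
  rw [hE]
  have hne0 : ((n:ℝ≥0∞)+1) ≠ 0 := by simp
  have hnetop : ((n:ℝ≥0∞)+1) ≠ ⊤ := by simp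
  rw [← ENNReal.mul_le_mul_iff_right hne0 hnetop]
  calc ((n:ℝ≥0∞)+1) * ENNReal.ofReal α = ENNReal.ofReal (((n:ℝ)+1) * α) := by
        rw [ENNReal.ofReal_mul (by positivity)]
        congr 1
        rw [ENNReal.ofReal_add (by positivity) zero_le_one]
        simp [ENNReal.ofReal_natCast]
    _ ≤ (k : ℝ≥0∞) := by
        rw [← ENNReal.ofReal_natCast]
        exact ENNReal.ofReal_le_ofReal (Nat.le_ceil _)
    _ ≤ _ := hsum
end

section
/- Consider the EXPRESS calibration strategy: at time t, index j ∈ {-n,...,t-1} is selected into the calibration set iff S_t(X_j) = 1 and S_i(X_j) = S_i(X_t) for all i ∈ {0,...,t-1}, where {S_i} are decision-driven selection rules; the augmented set D̃_t additionally contains t iff S_t(X_t) = 1. Then for any permutation π of D̃_t, extended by the identity off D̃_t to a permutation π̃ of {-n,...,t}, the selection map is symmetric: Ĩ_t(Z_{-n},...,Z_t) = Ĩ_t(Z_{π̃(-n)},...,Z_{π̃(t)}). -/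
/-- Decision-driven selection rules: the rule at time `t` is a deterministic function
(given by the mechanism `g`) of the past selection decisions. -/
def rules {X : Type*} (g : (t : ℕ) → (Fin t → Bool) → X → Bool) (x : ℕ → X) :
    ℕ → X → Bool
  | t => g t (fun i => rules g x i.1 (x i.1))
  decreasing_by exact i.isLt

/-- The augmented EXPRESS calibration set `D̃_t` at time `t` for data `x : ℤ → X`
(indices `-n,…,t`, negative indices offline): an index `j` is selected iff
`S_t(x_j) = 1` and `S_i(x_j) = S_i(x_t)` for all `i < t`.  (For `j = t` these
conditions reduce to `S_t(x_t) = 1`, so `t ∈ D̃_t` iff the test point is selected.) -/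
def expressSet {X : Type*} (g : (t : ℕ) → (Fin t → Bool) → X → Bool)
    (n t : ℕ) (x : ℤ → X) : Set ℤ :=
  {j : ℤ | -(n : ℤ) ≤ j ∧ j ≤ (t : ℤ) ∧
    rules g (fun k : ℕ => x (k : ℤ)) t (x j) = true ∧
    ∀ i : ℕ, i < t →
      rules g (fun k : ℕ => x (k : ℤ)) i (x j) =
      rules g (fun k : ℕ => x (k : ℤ)) i (x (t : ℤ))}

/-- **Symmetry of the EXPRESS strategy.** For any permutation `π` of the augmented
calibration set `D̃_t` (extended by the identity off `D̃_t`), the selection map is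
symmetric: `Ĩ_t(Z_{π(-n)},…,Z_{π(t)}) = Ĩ_t(Z_{-n},…,Z_t)`. -/
theorem expressSet_symmetric {X : Type*}
    (g : (t : ℕ) → (Fin t → Bool) → X → Bool)
    (n t : ℕ) (x : ℤ → X) (π : Equiv.Perm ℤ)
    (hfix : ∀ j : ℤ, j ∉ expressSet g n t x → π j = j)
    (hmaps : ∀ j : ℤ, j ∈ expressSet g n t x → π j ∈ expressSet g n t x) :
    expressSet g n t (fun j => x (π j)) = expressSet g n t x := by
  have hpt : ∀ j : ℤ, ∀ i : ℕ, i < t →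
      rules g (fun k : ℕ => x (k : ℤ)) i (x (π j)) =
      rules g (fun k : ℕ => x (k : ℤ)) i (x j) := by
    intro j i hi
    by_cases hj : j ∈ expressSet g n t x
    · have hj' := hmaps j hj
      rw [hj'.2.2.2 i hi, hj.2.2.2 i hi]
    · rw [hfix j hj]
  have htp : ∀ j : ℤ,
      rules g (fun k : ℕ => x (k : ℤ)) t (x (π j)) =
      rules g (fun k : ℕ => x (k : ℤ)) t (x j) := by
    intro j
    by_cases hj : j ∈ expressSet g n t x
    · have hj' := hmaps j hj
      rw [hj'.2.2.1, hj.2.2.1]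
    · rw [hfix j hj]
  have hR : ∀ i : ℕ, i ≤ t →
      rules g (fun k : ℕ => x (π (k : ℤ))) i = rules g (fun k : ℕ => x (k : ℤ)) i := by
    intro i
    induction i using Nat.strong_induction_on with
    | _ i ih =>
      intro hi
      funext y
      rw [rules, rules]
      congr 1
      funext ⟨j, hj⟩
      have hjt : j < t := lt_of_lt_of_le hj hi
      rw [ih j hj (le_of_lt hjt)]
      exact hpt (j : ℤ) j hjt
  ext j
  simp only [expressSet, Set.mem_setOf_eq]
  rw [hR t le_rfl]
  constructor
  · rintro ⟨h1, h2, h3, h4⟩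
    refine ⟨h1, h2, ?_, ?_⟩
    · rw [← htp j]; exact h3
    · intro i hi
      have h := h4 i hi
      rw [hR i (le_of_lt hi)] at h
      rw [← hpt j i hi, h, hpt t i hi]
  · rintro ⟨h1, h2, h3, h4⟩
    refine ⟨h1, h2, ?_, ?_⟩
    · rw [htp j]; exact h3
    · intro i hi
      rw [hR i (le_of_lt hi), hpt j i hi, hpt t i hi]
      exact h4 i hi
end

section
/- Let Z_{-n}, ..., Z_t be exchangeable random variables and let Ĩ_t : Z^{N+1} → 2^{{-n,...,t}} be a measurable set-valued selection map satisfying the symmetry property: for every index set D with P(Ĩ_t(Z) = D) > 0 and every permutation π of D, extended by the identity to π̃ on {-n,...,t}, one has Ĩ_t(Z_{π̃(-n)},...,Z_{π̃(t)}) = Ĩ_t(Z_{-n},...,Z_t). Then the selected variables {Z_i}_{i ∈ D̃_t} are exchangeable conditional on {Ĩ_t = D}: for every measurable A ⊆ Z^{|D|} and every permutation π of D, P((Z_i)_{i∈D} ∈ A | Ĩ_t = D) = P((Z_{π(i)})_{i∈D} ∈ A | Ĩ_t = D). -/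
open MeasureTheory ProbabilityTheory

/-- **Conditional exchangeability of the selected data.** If `Z₁,…,Z_N` are
exchangeable and the selection map `sel` is symmetric (condition (S)), then
conditionally on `{sel = D}`, the selected variables `(Z_i)_{i ∈ D}` are
exchangeable: permuting them within `D` does not change their conditional law. -/
theorem selected_conditionally_exchangeable
    {Ω E : Type*} [MeasurableSpace Ω] [MeasurableSpace E]
    (μ : Measure Ω) [IsProbabilityMeasure μ] {N : ℕ}
    (Z : Fin N → Ω → E) (hZ : ∀ i, Measurable (Z i))
    (sel : (Fin N → E) → Finset (Fin N))
    (hselmeas : ∀ D : Finset (Fin N), MeasurableSet {x : Fin N → E | sel x = D})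
    (hexch : ∀ σ : Equiv.Perm (Fin N),
      Measure.map (fun ω i => Z (σ i) ω) μ = Measure.map (fun ω i => Z i ω) μ)
    (hsym : ∀ (D : Finset (Fin N)) (π : Equiv.Perm (Fin N)),
      μ {ω | sel (fun i => Z i ω) = D} ≠ 0 → (∀ i, i ∉ D → π i = i) →
      ∀ x : Fin N → E, sel x = D → sel (fun i => x (π i)) = sel x)
    (D : Finset (Fin N)) (hD : μ {ω | sel (fun i => Z i ω) = D} ≠ 0)
    (π : Equiv.Perm (Fin N)) (hπ : ∀ i, i ∉ D → π i = i)
    (A : Set ({ i // i ∈ D } → E)) (hA : MeasurableSet A) :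
    μ[|{ω | sel (fun i => Z i ω) = D}] {ω | (fun i : { i // i ∈ D } => Z i.1 ω) ∈ A} =
      μ[|{ω | sel (fun i => Z i ω) = D}]
        {ω | (fun i : { i // i ∈ D } => Z (π i.1) ω) ∈ A} := by

  classical
  have hZm : Measurable (fun ω i => Z i ω) := measurable_pi_lambda _ hZ
  have hS : MeasurableSet {ω | sel (fun i => Z i ω) = D} := hZm (hselmeas D)
  have hπinv : ∀ i, i ∉ D → π⁻¹ i = i := by
    intro i hi
    conv_lhs => rw [← hπ i hi]
    exact π.symm_apply_apply i
  have hrestr : Measurable fun (x : Fin N → E) (i : { i // i ∈ D }) => x i.1 :=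
    measurable_pi_lambda _ (fun i => measurable_pi_apply _)
  set B : Set (Fin N → E) :=
    {x | sel x = D ∧ (fun i : { i // i ∈ D } => x i.1) ∈ A} with hBdef
  have hB : MeasurableSet B := (hselmeas D).inter (hrestr hA)
  have hT : Measurable fun (x : Fin N → E) (i : Fin N) => x (π i) :=
    measurable_pi_lambda _ (fun i => measurable_pi_apply _)
  -- key set identity
  have hpre : (fun (x : Fin N → E) (i : Fin N) => x (π i)) ⁻¹' B
      = {x : Fin N → E | sel x = D ∧ (fun i : { i // i ∈ D } => x (π i.1)) ∈ A} := by
    ext x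
    simp only [Set.mem_preimage, hBdef, Set.mem_setOf_eq]
    constructor
    · rintro ⟨h1, h2⟩
      have h3 := hsym D π⁻¹ hD hπinv _ h1
      have h4 : (fun i => x (π (π⁻¹ i))) = x := by
        funext i; rw [Equiv.Perm.inv_def, Equiv.apply_symm_apply]
      rw [h4] at h3
      exact ⟨h3.trans h1, h2⟩
    · rintro ⟨h1, h2⟩
      exact ⟨(hsym D π hD hπ x h1).trans h1, h2⟩
  have hmap : Measure.map (fun (x : Fin N → E) (i : Fin N) => x (π i))
      (Measure.map (fun ω i => Z i ω) μ) = Measure.map (fun ω i => Z i ω) μ := by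
    rw [Measure.map_map hT hZm]
    exact hexch π
  have key : μ ({ω | sel (fun i => Z i ω) = D} ∩ {ω | (fun i : { i // i ∈ D } => Z i.1 ω) ∈ A})
      = μ ({ω | sel (fun i => Z i ω) = D} ∩ {ω | (fun i : { i // i ∈ D } => Z (π i.1) ω) ∈ A}) := by
    have e1 : {ω | sel (fun i => Z i ω) = D} ∩ {ω | (fun i : { i // i ∈ D } => Z i.1 ω) ∈ A}
        = (fun ω i => Z i ω) ⁻¹' B := rfl
    have e2 : {ω | sel (fun i => Z i ω) = D} ∩ {ω | (fun i : { i // i ∈ D } => Z (π i.1) ω) ∈ A}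
        = (fun ω i => Z i ω) ⁻¹' ((fun (x : Fin N → E) (i : Fin N) => x (π i)) ⁻¹' B) := by
      rw [hpre]; rfl
    rw [e1, e2, ← Measure.map_apply hZm hB, ← Measure.map_apply hZm (hT hB),
      ← Measure.map_apply hT hB, hmap]
  rw [cond_apply hS, cond_apply hS, key]
end

section
/- Let Z_{-n}, ..., Z_t be exchangeable, let Ĩ_t be a symmetric selection map as in the symmetry condition (S), and suppose index t ∈ Ĩ_t iff S_t = 1 (the test point is selected). Let R_i = R(Z_i) be non-conformity scores for a fixed measurable score function R. Define, on the event t ∈ D̃_t, the p-value p = (∑_{j ∈ D̃_t} 1{R_j ≥ R_t}) / |D̃_t|. Then P(p ≤ α | S_t = 1) ≤ α for every α ∈ [0,1], provided P(S_t = 1) > 0. -/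
open MeasureTheory ProbabilityTheory
open scoped ENNReal

lemma count_small_rank {n : ℕ} (D : Finset (Fin n)) (r : Fin n → ℝ) (s : ℕ) :
    (D.filter (fun j => (D.filter (fun k => r j ≤ r k)).card ≤ s)).card ≤ s := by
  set T := D.filter (fun j => (D.filter (fun k => r j ≤ r k)).card ≤ s) with hT
  rcases T.eq_empty_or_nonempty with h | h
  · simp [h]
  · obtain ⟨j₀, hj₀T, hmin⟩ := T.exists_min_image r h
    have hsub : T ⊆ D.filter (fun k => r j₀ ≤ r k) := by
      intro k hk
      have hkD : k ∈ D := (Finset.mem_filter.mp (hT ▸ hk)).1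
      exact Finset.mem_filter.mpr ⟨hkD, hmin k hk⟩
    exact (Finset.card_le_card hsub).trans (Finset.mem_filter.mp hj₀T).2


/-- **Validity of the selective conformal p-value.** Let `Z₁,…,Z_N` be exchangeable,
let `sel` be a symmetric selection map (condition (S)), and let `t` be the test index,
which is selected on the event `{t ∈ sel(Z)}` (i.e. `S_t = 1`).  With nonconformity
scores `R_i = R(Z_i)` and conformal p-value
`p = #{j ∈ D̃ : R_j ≥ R_t} / |D̃|` on the selection event, we have
`P(p ≤ α ∣ S_t = 1) ≤ α` for every `α ∈ [0,1]`. -/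
theorem selective_conformal_p_value_valid
    {Ω E : Type*} [MeasurableSpace Ω] [MeasurableSpace E]
    (μ : Measure Ω) [IsProbabilityMeasure μ] {N : ℕ}
    (Z : Fin N → Ω → E) (hZ : ∀ i, Measurable (Z i))
    (sel : (Fin N → E) → Finset (Fin N))
    (hselmeas : ∀ D : Finset (Fin N), MeasurableSet {x : Fin N → E | sel x = D})
    (hexch : ∀ σ : Equiv.Perm (Fin N),
      Measure.map (fun ω i => Z (σ i) ω) μ = Measure.map (fun ω i => Z i ω) μ)
    (hsym : ∀ (x : Fin N → E) (π : Equiv.Perm (Fin N)),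
      (∀ i, i ∉ sel x → π i = i) → sel (fun i => x (π i)) = sel x)
    (t : Fin N) (R : E → ℝ) (hR : Measurable R)
    (hpos : μ {ω | t ∈ sel (fun i => Z i ω)} ≠ 0)
    (α : ℝ) (hα : α ∈ Set.Icc (0 : ℝ) 1) :
    μ[|{ω | t ∈ sel (fun i => Z i ω)}]
      {ω | (((sel (fun i => Z i ω)).filter
          (fun j => R (Z t ω) ≤ R (Z j ω))).card : ℝ) /
        ((sel (fun i => Z i ω)).card : ℝ) ≤ α} ≤ ENNReal.ofReal α := by
  obtain ⟨hα0, _⟩ := hα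
  set X : Ω → (Fin N → E) := fun ω i => Z i ω with hXdef
  have hXm : Measurable X := measurable_pi_lambda _ hZ
  -- the basic events in function space
  set S : Finset (Fin N) → Fin N → Set (Fin N → E) := fun D j =>
    {x | sel x = D ∧ ((D.filter (fun k => R (x j) ≤ R (x k))).card : ℝ) / (D.card : ℝ) ≤ α}
    with hSdef
  have hcardm : ∀ (D : Finset (Fin N)) (j : Fin N),
      Measurable (fun x : Fin N → E => ((D.filter (fun k => R (x j) ≤ R (x k))).card : ℝ)) := by
    intro D j
    have heq : (fun x : Fin N → E => ((D.filter (fun k => R (x j) ≤ R (x k))).card : ℝ))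
        = fun x => ∑ k ∈ D, if R (x j) ≤ R (x k) then (1:ℝ) else 0 := by
      funext x
      rw [Finset.card_filter]
      push_cast
      rfl
    rw [heq]
    exact Finset.measurable_sum _ (fun k _ =>
      Measurable.ite (measurableSet_le (hR.comp (measurable_pi_apply j))
        (hR.comp (measurable_pi_apply k))) measurable_const measurable_const)
  have hSmeas : ∀ D j, MeasurableSet (S D j) := by
    intro D j
    exact (hselmeas D).inter
      (measurableSet_le ((hcardm D j).div_const _) measurable_const)
  -- permutation invariance: μ(X⁻¹(S D j)) = μ(X⁻¹(S D t)) for j ∈ D, t ∈ D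
  have key_perm : ∀ D : Finset (Fin N), t ∈ D → ∀ j ∈ D,
      μ (X ⁻¹' (S D j)) = μ (X ⁻¹' (S D t)) := by
    intro D htD j hjD
    set π := Equiv.swap t j with hπ
    have hπfix : ∀ i, i ∉ D → π i = i := fun i hi =>
      Equiv.swap_apply_of_ne_of_ne (fun h => hi (h ▸ htD)) (fun h => hi (h ▸ hjD))
    have hππ : ∀ x : Fin N → E, (fun i => x (π (π i))) = x := by
      intro x; funext i; rw [Equiv.swap_apply_self]
    have hselπ : ∀ x : Fin N → E, sel (fun i => x (π i)) = D ↔ sel x = D := by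
      intro x
      constructor
      · intro h
        have h2 := hsym (fun i => x (π i)) π (by
          intro i hi; rw [h] at hi; exact hπfix i hi)
        rw [hππ x] at h2
        rw [h2, h]
      · intro h
        have h2 := hsym x π (by intro i hi; rw [h] at hi; exact hπfix i hi)
        rw [h2, h]
    have hπD : ∀ k ∈ D, π k ∈ D := by
      intro k hk
      rcases eq_or_ne k t with rfl | h1
      · simpa [hπ, Equiv.swap_apply_left] using hjD
      rcases eq_or_ne k j with rfl | h2
      · simpa [hπ, Equiv.swap_apply_right] using htD
      · simpa [hπ, Equiv.swap_apply_of_ne_of_ne h1 h2] using hk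
    have hcard_eq : ∀ (x : Fin N → E) (c : ℝ),
        (D.filter (fun k => c ≤ R (x (π k)))).card = (D.filter (fun k => c ≤ R (x k))).card := by
      intro x c
      apply Finset.card_bij' (fun k _ => π k) (fun k _ => π k)
      · intro a ha
        obtain ⟨haD, haP⟩ := Finset.mem_filter.mp ha
        exact Finset.mem_filter.mpr ⟨hπD a haD, haP⟩
      · intro a ha
        obtain ⟨haD, haP⟩ := Finset.mem_filter.mp ha
        refine Finset.mem_filter.mpr ⟨hπD a haD, ?_⟩
        rwa [Equiv.swap_apply_self]
      · intro a _; exact Equiv.swap_apply_self t j a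
      · intro a _; exact Equiv.swap_apply_self t j a
    have hpre : (fun ω i => Z (π i) ω) ⁻¹' (S D t) = X ⁻¹' (S D j) := by
      ext ω
      simp only [Set.mem_preimage, hSdef, Set.mem_setOf_eq]
      constructor
      · rintro ⟨h1, h2⟩
        refine ⟨(hselπ (X ω)).mp h1, ?_⟩
        have hπt : π t = j := Equiv.swap_apply_left t j
        simp only [hπt] at h2
        rwa [hcard_eq (X ω) (R (X ω j))] at h2
      · rintro ⟨h1, h2⟩
        refine ⟨(hselπ (X ω)).mpr h1, ?_⟩
        have hπt : π t = j := Equiv.swap_apply_left t j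
        simp only [hπt]
        rwa [hcard_eq (X ω) (R (X ω j))]
    have hm1 : Measurable (fun ω i => Z (π i) ω) := measurable_pi_lambda _ (fun i => hZ (π i))
    calc μ (X ⁻¹' (S D j)) = μ ((fun ω i => Z (π i) ω) ⁻¹' (S D t)) := by rw [hpre]
      _ = (Measure.map (fun ω i => Z (π i) ω) μ) (S D t) :=
          (Measure.map_apply hm1 (hSmeas D t)).symm
      _ = (Measure.map X μ) (S D t) := by rw [hexch π]
      _ = μ (X ⁻¹' (S D t)) := Measure.map_apply hXm (hSmeas D t)
  -- main per-D bound
  have key_D : ∀ D : Finset (Fin N), t ∈ D →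
      μ (X ⁻¹' (S D t)) ≤ ENNReal.ofReal α * μ (X ⁻¹' {x | sel x = D}) := by
    intro D htD
    set m := D.card with hm
    have hm0 : 0 < m := Finset.card_pos.mpr ⟨t, htD⟩
    set s := Nat.floor (α * m) with hs
    have hU : MeasurableSet (X ⁻¹' {x | sel x = D}) := hXm (hselmeas D)
    have hpt : ∀ ω, (∑ j ∈ D, (X ⁻¹' (S D j)).indicator (1 : Ω → ℝ≥0∞) ω)
        ≤ (s : ℝ≥0∞) * ((X ⁻¹' {x | sel x = D}).indicator 1 ω) := by
      intro ω
      by_cases hsel : sel (X ω) = D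
      · have h1 : (∑ j ∈ D, (X ⁻¹' (S D j)).indicator (1 : Ω → ℝ≥0∞) ω)
            = ((D.filter (fun j => X ω ∈ S D j)).card : ℝ≥0∞) := by
          rw [Finset.card_filter]
          push_cast
          refine Finset.sum_congr rfl fun j _ => ?_
          by_cases hj : X ω ∈ S D j <;> simp [Set.indicator_apply, hj]
        have h2 : D.filter (fun j => X ω ∈ S D j)
            = D.filter (fun j => (D.filter (fun k => R (X ω j) ≤ R (X ω k))).card ≤ s) := by
          apply Finset.filter_congr
          intro j _
          simp only [hSdef, Set.mem_setOf_eq, hsel, true_and]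
          rw [div_le_iff₀ (by exact_mod_cast hm0), Nat.le_floor_iff
            (mul_nonneg hα0 (Nat.cast_nonneg m))]
        have h3 := count_small_rank D (fun k => R (X ω k)) s
        rw [h1, h2]
        have hind : (X ⁻¹' {x | sel x = D}).indicator (1 : Ω → ℝ≥0∞) ω = 1 := by
          simp [Set.indicator_apply, Set.mem_preimage, hsel]
        rw [hind, mul_one]
        exact_mod_cast h3
      · have hz : ∀ j ∈ D, (X ⁻¹' (S D j)).indicator (1 : Ω → ℝ≥0∞) ω = 0 := by
          intro j _
          simp only [Set.indicator_apply_eq_zero]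
          intro hmem
          exact absurd hmem.1 hsel
        rw [Finset.sum_congr rfl hz]
        simp
    have hsum : ∑ j ∈ D, μ (X ⁻¹' (S D j))
        ≤ (s : ℝ≥0∞) * μ (X ⁻¹' {x | sel x = D}) := by
      calc ∑ j ∈ D, μ (X ⁻¹' (S D j))
          = ∑ j ∈ D, ∫⁻ ω, (X ⁻¹' (S D j)).indicator 1 ω ∂μ := by
            refine Finset.sum_congr rfl fun j _ => ?_
            rw [lintegral_indicator_one (hXm (hSmeas D j))]
        _ = ∫⁻ ω, ∑ j ∈ D, (X ⁻¹' (S D j)).indicator 1 ω ∂μ :=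
            (lintegral_finset_sum _ fun j _ =>
              measurable_one.indicator (hXm (hSmeas D j))).symm
        _ ≤ ∫⁻ ω, (s : ℝ≥0∞) * ((X ⁻¹' {x | sel x = D}).indicator 1 ω) ∂μ :=
            lintegral_mono hpt
        _ = (s : ℝ≥0∞) * μ (X ⁻¹' {x | sel x = D}) := by
            rw [lintegral_const_mul _ (measurable_one.indicator hU),
              lintegral_indicator_one hU]
    have hsame : ∑ j ∈ D, μ (X ⁻¹' (S D j)) = (m : ℝ≥0∞) * μ (X ⁻¹' (S D t)) := by
      rw [Finset.sum_congr rfl (fun j hj => key_perm D htD j hj), Finset.sum_const,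
        nsmul_eq_mul]
    have hsle : (s : ℝ≥0∞) ≤ ENNReal.ofReal α * (m : ℝ≥0∞) := by
      have h1 : (s : ℝ) ≤ α * m := Nat.floor_le (mul_nonneg hα0 (Nat.cast_nonneg m))
      calc (s : ℝ≥0∞) = ENNReal.ofReal (s : ℝ) := (ENNReal.ofReal_natCast s).symm
        _ ≤ ENNReal.ofReal (α * m) := ENNReal.ofReal_le_ofReal h1
        _ = ENNReal.ofReal α * ENNReal.ofReal (m : ℝ) := ENNReal.ofReal_mul hα0
        _ = ENNReal.ofReal α * (m : ℝ≥0∞) := by rw [ENNReal.ofReal_natCast]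
    have hfin : (m : ℝ≥0∞) * μ (X ⁻¹' (S D t))
        ≤ (m : ℝ≥0∞) * (ENNReal.ofReal α * μ (X ⁻¹' {x | sel x = D})) := by
      rw [← hsame]
      calc ∑ j ∈ D, μ (X ⁻¹' (S D j)) ≤ (s : ℝ≥0∞) * μ (X ⁻¹' {x | sel x = D}) := hsum
        _ ≤ (ENNReal.ofReal α * (m : ℝ≥0∞)) * μ (X ⁻¹' {x | sel x = D}) :=
            mul_le_mul_left hsle _
        _ = (m : ℝ≥0∞) * (ENNReal.ofReal α * μ (X ⁻¹' {x | sel x = D})) := by ring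
    exact (ENNReal.mul_le_mul_iff_right (by exact_mod_cast hm0.ne') (ENNReal.natCast_ne_top m)).mp hfin
  -- assemble over all D containing t
  classical
  set 𝒟 : Finset (Finset (Fin N)) := Finset.univ.filter (fun D => t ∈ D) with h𝒟
  set A : Set Ω := {ω | t ∈ sel (fun i => Z i ω)} with hA
  set P : Set Ω := {ω | (((sel (fun i => Z i ω)).filter
          (fun j => R (Z t ω) ≤ R (Z j ω))).card : ℝ) /
        ((sel (fun i => Z i ω)).card : ℝ) ≤ α} with hP
  have hAeq : A = ⋃ D ∈ 𝒟, X ⁻¹' {x | sel x = D} := by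
    ext ω
    simp only [hA, Set.mem_setOf_eq, Set.mem_iUnion, Set.mem_preimage, h𝒟,
      Finset.mem_filter, Finset.mem_univ, true_and, exists_prop]
    constructor
    · intro h; exact ⟨sel (X ω), h, rfl⟩
    · rintro ⟨D, hD, hsel⟩; rw [show (fun i => Z i ω) = X ω from rfl, hsel]; exact hD
  have hABeq : A ∩ P = ⋃ D ∈ 𝒟, X ⁻¹' (S D t) := by
    ext ω
    simp only [Set.mem_inter_iff, hA, hP, Set.mem_setOf_eq, Set.mem_iUnion,
      Set.mem_preimage, h𝒟, Finset.mem_filter, Finset.mem_univ, true_and, exists_prop,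
      hSdef]
    constructor
    · rintro ⟨h1, h2⟩
      exact ⟨sel (X ω), h1, rfl, h2⟩
    · rintro ⟨D, hD, hsel, h2⟩
      rw [show (fun i => Z i ω) = X ω from rfl, hsel]
      exact ⟨hD, h2⟩
  have hdisj : (↑𝒟 : Set (Finset (Fin N))).PairwiseDisjoint
      (fun D => X ⁻¹' {x | sel x = D}) := by
    intro D1 _ D2 _ hne
    apply Set.disjoint_left.mpr
    intro ω h1 h2
    exact hne (h1.symm.trans h2)
  have hdisj2 : (↑𝒟 : Set (Finset (Fin N))).PairwiseDisjoint (fun D => X ⁻¹' (S D t)) := by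
    intro D1 h1 D2 h2 hne
    exact (hdisj h1 h2 hne).mono
      (Set.preimage_mono (fun x hx => hx.1)) (Set.preimage_mono (fun x hx => hx.1))
  have hAmeas : MeasurableSet A := by
    rw [hAeq]
    exact Finset.measurableSet_biUnion _ (fun D _ => hXm (hselmeas D))
  have hmain : μ (A ∩ P) ≤ ENNReal.ofReal α * μ A := by
    rw [hABeq, hAeq, measure_biUnion_finset hdisj2 (fun D _ => hXm (hSmeas D t)),
      measure_biUnion_finset hdisj (fun D _ => hXm (hselmeas D)), Finset.mul_sum]
    refine Finset.sum_le_sum fun D hD => key_D D ?_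
    exact (Finset.mem_filter.mp hD).2
  rw [cond_apply hAmeas]
  calc (μ A)⁻¹ * μ (A ∩ P) ≤ (μ A)⁻¹ * (ENNReal.ofReal α * μ A) :=
        mul_le_mul_right hmain _
    _ = ENNReal.ofReal α * ((μ A)⁻¹ * μ A) := by ring
    _ = ENNReal.ofReal α := by
        rw [ENNReal.inv_mul_cancel hpos (measure_ne_top μ A), mul_one]
end

section
/- Suppose for each t ∈ {0,...,T} and each binary sequence (s_0,...,s_{t-1}) with P(S_0=s_0,...,S_{t-1}=s_{t-1},S_t=1) > 0, the strong selection-conditional coverage holds: P(Y_t ∈ Ĉ_t(X_t) | S_0=s_0,...,S_{t-1}=s_{t-1},S_t=1) ≥ 1−α. Then the positive false coverage rate satisfies pFCR(T) := E[ (∑_{t=0}^T S_t 1{Y_t ∉ Ĉ_t(X_t)}) / (∑_{t=0}^T S_t) | ∑_{t=0}^T S_t > 0 ] ≤ α. -/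
open MeasureTheory ProbabilityTheory

/-- **pFCR control from strong selection-conditional coverage.** `S t` are the
selection indicators, `A t = {Y_t ∉ Ĉ_t(X_t)}` the miscoverage events.  Assuming
strong selection-conditional coverage (coverage at least `1 - α` conditional on any
past selection pattern together with `S_t = 1`) and that, conditional on the
selections up to time `t`, the future selections are independent of the coverage
event at time `t`, the positive false coverage rate is at most `α`. -/
theorem pFCR_le_of_strong_selection_conditional_coverage
    {Ω : Type*} [MeasurableSpace Ω] (μ : Measure Ω) [IsProbabilityMeasure μ]
    (T : ℕ) (S : Fin (T + 1) → Ω → Bool) (hS : ∀ t, Measurable (S t))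
    (A : Fin (T + 1) → Set Ω) (hA : ∀ t, MeasurableSet (A t)) (α : ℝ)
    (hcov : ∀ (t : Fin (T + 1)) (s : Fin (T + 1) → Bool),
      μ {ω | (∀ j, j < t → S j ω = s j) ∧ S t ω = true} ≠ 0 →
      ENNReal.ofReal (1 - α) ≤
        μ[|{ω | (∀ j, j < t → S j ω = s j) ∧ S t ω = true}] (A t)ᶜ)
    (hind : ∀ (t : Fin (T + 1)) (s : Fin (T + 1) → Bool),
      μ (A t ∩ {ω | ∀ j, S j ω = s j}) * μ {ω | ∀ j, j ≤ t → S j ω = s j} =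
        μ (A t ∩ {ω | ∀ j, j ≤ t → S j ω = s j}) * μ {ω | ∀ j, S j ω = s j})
    (hpos : μ {ω | ∃ t, S t ω = true} ≠ 0) :
    ∫ ω, (∑ t, if S t ω then (A t).indicator (fun _ => (1 : ℝ)) ω else 0) /
        (∑ t, if S t ω then (1 : ℝ) else 0)
      ∂(μ[|{ω | ∃ t, S t ω = true}]) ≤ α := by
  classical
  set E : Set Ω := {ω | ∃ t, S t ω = true} with hEdef
  set Es : (Fin (T + 1) → Bool) → Set Ω := fun s => {ω | ∀ j, S j ω = s j} with hEsdef
  set Gs : Fin (T + 1) → (Fin (T + 1) → Bool) → Set Ω :=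
    fun t s => {ω | (∀ j, j < t → S j ω = s j) ∧ S t ω = true} with hGdef
  have hEsm : ∀ s, MeasurableSet (Es s) := by
    intro s
    have : Es s = ⋂ j, S j ⁻¹' {s j} := by
      ext ω; simp [hEsdef, Set.mem_iInter]
    rw [this]
    exact MeasurableSet.iInter fun j => hS j (measurableSet_singleton _)
  have hGm : ∀ t s, MeasurableSet (Gs t s) := by
    intro t s
    have : Gs t s = (⋂ j, ⋂ (_ : j < t), S j ⁻¹' {s j}) ∩ S t ⁻¹' {true} := by
      ext ω; simp [hGdef, Set.mem_iInter]
    rw [this]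
    exact ((MeasurableSet.iInter fun j => MeasurableSet.iInter fun _ =>
      hS j (measurableSet_singleton _))).inter (hS t (measurableSet_singleton _))
  have hEm : MeasurableSet E := by
    have : E = ⋃ t, S t ⁻¹' {true} := by
      ext ω; simp [hEdef]
    rw [this]
    exact MeasurableSet.iUnion fun t => hS t (measurableSet_singleton _)
  -- F = G when s t = true
  have hFG : ∀ (t : Fin (T + 1)) (s : Fin (T + 1) → Bool), s t = true →
      {ω | ∀ j, j ≤ t → S j ω = s j} = Gs t s := by
    intro t s hst
    ext ω
    constructor
    · intro h
      exact ⟨fun j hj => h j hj.le, by rw [h t le_rfl, hst]⟩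
    · rintro ⟨h1, h2⟩ j hj
      rcases lt_or_eq_of_le hj with h | h
      · exact h1 j h
      · subst h; rw [h2, hst]
  -- α is nonneg
  have halpha : 0 ≤ α := by
    have h1 : ∃ t, μ (S t ⁻¹' {true}) ≠ 0 := by
      by_contra h
      push_neg at h
      have h2 : μ (⋃ t, S t ⁻¹' {true}) = 0 := measure_iUnion_null h
      have h3 : E ⊆ ⋃ t, S t ⁻¹' {true} := by
        rintro ω ⟨t, ht⟩; exact Set.mem_iUnion.2 ⟨t, ht⟩
      exact hpos (measure_mono_null h3 h2)
    obtain ⟨t, ht⟩ := h1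
    have h2 : ∃ s, μ (Gs t s) ≠ 0 := by
      by_contra h
      push_neg at h
      have h2 : μ (⋃ s, Gs t s) = 0 := measure_iUnion_null h
      have h3 : S t ⁻¹' {true} ⊆ ⋃ s, Gs t s := by
        intro ω hω
        exact Set.mem_iUnion.2 ⟨fun j => S j ω, fun j _ => rfl, hω⟩
      exact ht (measure_mono_null h3 h2)
    obtain ⟨s, hGs0⟩ := h2
    have := hcov t s hGs0
    have hprob : IsProbabilityMeasure (μ[|Gs t s]) :=
      cond_isProbabilityMeasure hGs0
    have h4 : ENNReal.ofReal (1 - α) ≤ 1 := this.trans prob_le_one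
    have := ENNReal.ofReal_le_one.mp h4
    linarith
  -- key per-pattern bound
  have hkey : ∀ (s : Fin (T + 1) → Bool) (t : Fin (T + 1)), s t = true →
      (μ (A t ∩ Es s)).toReal ≤ α * (μ (Es s)).toReal := by
    intro s t hst
    have hEsG : Es s ⊆ Gs t s := by
      intro ω hω
      exact ⟨fun j _ => hω j, by rw [hω t, hst]⟩
    by_cases hG0 : μ (Gs t s) = 0
    · have hEs0 : μ (Es s) = 0 := measure_mono_null hEsG hG0
      have hI0 : μ (A t ∩ Es s) = 0 :=
        measure_mono_null Set.inter_subset_right hEs0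
      rw [hI0, hEs0]
      simp
    · -- coverage bound on G
      have hGfin : μ (Gs t s) ≠ ⊤ := measure_ne_top μ _
      have hg : (0:ℝ) < (μ (Gs t s)).toReal := ENNReal.toReal_pos hG0 hGfin
      have hAG : (μ (Gs t s ∩ A t)).toReal ≤ α * (μ (Gs t s)).toReal := by
        by_cases h1 : 1 ≤ α
        · have h2 : μ (Gs t s ∩ A t) ≤ μ (Gs t s) := measure_mono Set.inter_subset_left
          have h3 := ENNReal.toReal_mono hGfin h2
          nlinarith
        · push_neg at h1
          have hcovt := hcov t s hG0
          rw [cond_apply (hGm t s)] at hcovt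
          have h2 : ENNReal.ofReal (1 - α) * μ (Gs t s) ≤ μ (Gs t s ∩ (A t)ᶜ) := by
            calc ENNReal.ofReal (1 - α) * μ (Gs t s)
                ≤ (μ (Gs t s))⁻¹ * μ (Gs t s ∩ (A t)ᶜ) * μ (Gs t s) := by gcongr
              _ = μ (Gs t s ∩ (A t)ᶜ) := by
                  rw [mul_comm ((μ (Gs t s))⁻¹), mul_assoc,
                    ENNReal.inv_mul_cancel hG0 hGfin, mul_one]
          have hsplit : μ (Gs t s ∩ A t) + μ (Gs t s \ A t) = μ (Gs t s) :=
            measure_inter_add_diff (Gs t s) (hA t)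
          have hdiff : Gs t s \ A t = Gs t s ∩ (A t)ᶜ := rfl
          rw [hdiff] at hsplit
          have hfin1 : μ (Gs t s ∩ A t) ≠ ⊤ := measure_ne_top μ _
          have hfin2 : μ (Gs t s ∩ (A t)ᶜ) ≠ ⊤ := measure_ne_top μ _
          have h2' : (1 - α) * (μ (Gs t s)).toReal ≤ (μ (Gs t s ∩ (A t)ᶜ)).toReal := by
            have := ENNReal.toReal_mono hfin2 h2
            rwa [ENNReal.toReal_mul, ENNReal.toReal_ofReal (by linarith)] at this
          have hsplit' : (μ (Gs t s ∩ A t)).toReal + (μ (Gs t s ∩ (A t)ᶜ)).toReal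
              = (μ (Gs t s)).toReal := by
            rw [← ENNReal.toReal_add hfin1 hfin2, hsplit]
          linarith
      -- independence transfer
      have hindts := hind t s
      rw [hFG t s hst] at hindts
      have hre : (μ (A t ∩ Es s)).toReal * (μ (Gs t s)).toReal
          = (μ (A t ∩ Gs t s)).toReal * (μ (Es s)).toReal := by
        have := congrArg ENNReal.toReal hindts
        rwa [ENNReal.toReal_mul, ENNReal.toReal_mul] at this
      rw [Set.inter_comm (A t) (Gs t s)] at hre
      have hbound : (μ (A t ∩ Es s)).toReal * (μ (Gs t s)).toReal
          ≤ (α * (μ (Es s)).toReal) * (μ (Gs t s)).toReal := by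
        rw [hre]
        have hEsnn : (0:ℝ) ≤ (μ (Es s)).toReal := ENNReal.toReal_nonneg
        nlinarith
      exact le_of_mul_le_mul_right hbound hg
  -- the integrand
  set f : Ω → ℝ := fun ω =>
      (∑ t, if S t ω then (A t).indicator (fun _ => (1 : ℝ)) ω else 0) /
        (∑ t, if S t ω then (1 : ℝ) else 0) with hfdef
  -- measurability of f
  have hterm : ∀ t : Fin (T + 1), (fun ω => if S t ω then (A t).indicator
      (fun _ => (1 : ℝ)) ω else 0) = (S t ⁻¹' {true} ∩ A t).indicator (fun _ => (1:ℝ)) := by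
    intro t
    funext ω
    by_cases h : S t ω = true <;> by_cases h2 : ω ∈ A t <;>
      simp [h, h2, Set.indicator_apply]
  have htden : ∀ t : Fin (T + 1), (fun ω => if S t ω then (1:ℝ) else 0) =
      (S t ⁻¹' {true}).indicator (fun _ => (1:ℝ)) := by
    intro t
    funext ω
    by_cases h : S t ω = true <;> simp [h, Set.indicator_apply]
  have hnummeas : Measurable fun ω => ∑ t, if S t ω then (A t).indicator
      (fun _ => (1 : ℝ)) ω else 0 := by
    apply Finset.measurable_sum
    intro t _
    rw [hterm t]
    exact measurable_const.indicator ((hS t (measurableSet_singleton _)).inter (hA t))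
  have hdenmeas : Measurable fun ω => ∑ t, if S t ω then (1:ℝ) else 0 := by
    apply Finset.measurable_sum
    intro t _
    rw [htden t]
    exact measurable_const.indicator (hS t (measurableSet_singleton _))
  have hfmeas : Measurable f := hnummeas.div hdenmeas
  have hf0 : ∀ ω, 0 ≤ f ω := by
    intro ω
    apply div_nonneg
    · exact Finset.sum_nonneg fun t _ => by
        by_cases h : S t ω = true <;> simp [h, Set.indicator_apply] <;> positivity
    · exact Finset.sum_nonneg fun t _ => by
        by_cases h : S t ω = true <;> simp [h]
  have hf1 : ∀ ω, f ω ≤ 1 := by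
    intro ω
    apply div_le_one_of_le₀
    · apply Finset.sum_le_sum
      intro t _
      by_cases h : S t ω = true <;> simp [h, Set.indicator_apply]
      split <;> norm_num
    · exact Finset.sum_nonneg fun t _ => by
        by_cases h : S t ω = true <;> simp [h]
  have hfint : Integrable f μ := by
    refine Integrable.mono' (integrable_const (1:ℝ)) hfmeas.aestronglyMeasurable ?_
    filter_upwards with ω
    rw [Real.norm_eq_abs, abs_of_nonneg (hf0 ω)]
    exact hf1 ω
  -- rewrite the conditional integral
  have hEfin : μ E ≠ ⊤ := measure_ne_top μ _
  have he : (0:ℝ) < (μ E).toReal := ENNReal.toReal_pos hpos hEfin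
  show ∫ ω, f ω ∂(μ[|E]) ≤ α
  rw [ProbabilityTheory.cond, integral_smul_measure, ENNReal.toReal_inv, smul_eq_mul]
  rw [inv_mul_le_iff₀ he]
  -- main estimate: ∫_E f ≤ α * μ E
  -- decompose E over selection patterns
  set P : Finset (Fin (T + 1) → Bool) :=
    Finset.univ.filter (fun s => ∃ t, s t = true) with hPdef
  have hEunion : E = ⋃ s ∈ P, Es s := by
    ext ω
    simp only [Set.mem_iUnion, hPdef, Finset.mem_filter, Finset.mem_univ, true_and]
    constructor
    · rintro ⟨t, ht⟩
      exact ⟨fun j => S j ω, ⟨t, ht⟩, fun j => rfl⟩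
    · rintro ⟨s, ⟨t, ht⟩, hω⟩
      exact ⟨t, by rw [hω t, ht]⟩
  have hdisj : (↑P : Set (Fin (T + 1) → Bool)).Pairwise (Function.onFun Disjoint Es) := by
    intro s1 _ s2 _ hne
    rw [Function.onFun, Set.disjoint_left]
    intro ω h1 h2
    exact hne (funext fun j => (h1 j).symm.trans (h2 j))
  have hEsum : ∑ s ∈ P, μ (Es s) = μ E := by
    rw [hEunion]
    exact (measure_biUnion_finset hdisj fun s _ => hEsm s).symm
  -- per-pattern integral bound
  have hper : ∀ s ∈ P, ∫ ω in Es s, f ω ∂μ ≤ α * (μ (Es s)).toReal := by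
    intro s hs
    obtain ⟨t0, ht0⟩ : ∃ t, s t = true := by
      simpa [hPdef] using hs
    set n : ℝ := ∑ t, if s t then (1:ℝ) else 0 with hndef
    have hn1 : (1:ℝ) ≤ n := by
      rw [hndef]
      calc (1:ℝ) = if s t0 then (1:ℝ) else 0 := by rw [ht0]; simp
        _ ≤ ∑ t, if s t then (1:ℝ) else 0 := by
            apply Finset.single_le_sum (f := fun t => if s t then (1:ℝ) else 0)
            · intro t _; by_cases h : s t = true <;> simp [h]
            · exact Finset.mem_univ t0
    have hn0 : (0:ℝ) < n := by linarith
    have hcong : ∀ ω ∈ Es s, f ω =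
        (∑ t, if s t then (A t).indicator (fun _ => (1 : ℝ)) ω else 0) / n := by
      intro ω hω
      rw [hfdef]
      simp only
      congr 1
      · exact Finset.sum_congr rfl fun t _ => by rw [hω t]
      · rw [hndef]
        exact Finset.sum_congr rfl fun t _ => by rw [hω t]
    rw [setIntegral_congr_fun (hEsm s) hcong]
    rw [integral_div]
    rw [integral_finset_sum]
    · have hI : ∀ t : Fin (T + 1),
          (∫ ω in Es s, if s t then (A t).indicator (fun _ => (1 : ℝ)) ω else 0 ∂μ)
          = if s t then (μ (A t ∩ Es s)).toReal else 0 := by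
        intro t
        by_cases h : s t = true
        · simp only [h, if_true]
          rw [setIntegral_indicator (hA t), setIntegral_const, smul_eq_mul, mul_one,
            Set.inter_comm, Measure.real]
        · simp [h]
      rw [Finset.sum_congr rfl fun t _ => hI t]
      have hb : ∑ t, (if s t then (μ (A t ∩ Es s)).toReal else 0)
          ≤ ∑ t, (if s t then α * (μ (Es s)).toReal else 0) := by
        apply Finset.sum_le_sum
        intro t _
        by_cases h : s t = true
        · simp only [h, if_true]
          exact hkey s t h
        · simp [h]
      have hc : ∑ t, (if s t then α * (μ (Es s)).toReal else 0)
          = n * (α * (μ (Es s)).toReal) := by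
        rw [hndef, Finset.sum_mul]
        refine Finset.sum_congr rfl fun t _ => ?_
        by_cases h : s t = true
        · rw [if_pos h, if_pos h, one_mul]
        · rw [if_neg h, if_neg h, zero_mul]
      rw [div_le_iff₀ hn0]
      calc ∑ t, (if s t then (μ (A t ∩ Es s)).toReal else 0)
          ≤ n * (α * (μ (Es s)).toReal) := hc ▸ hb
        _ = α * (μ (Es s)).toReal * n := by ring
    · intro t _
      by_cases h : s t = true
      · simp only [h, if_true]
        refine Integrable.integrableOn ?_
        refine Integrable.mono' (integrable_const (1:ℝ))
          (measurable_const.indicator (hA t)).aestronglyMeasurable ?_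
        filter_upwards with ω
        by_cases h2 : ω ∈ A t <;> simp [h2, Set.indicator_apply]
      · have hz : (fun ω => if s t = true then (A t).indicator (fun _ => (1:ℝ)) ω else 0)
            = fun _ => (0:ℝ) := funext fun ω => if_neg h
        rw [hz]
        exact (integrable_zero _ _ _).integrableOn
  -- combine
  calc ∫ ω in E, f ω ∂μ = ∑ s ∈ P, ∫ ω in Es s, f ω ∂μ := by
        rw [hEunion]
        exact integral_biUnion_finset P (fun s _ => hEsm s) hdisj
          (fun s _ => hfint.integrableOn)
    _ ≤ ∑ s ∈ P, α * (μ (Es s)).toReal := Finset.sum_le_sum hper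
    _ = α * ∑ s ∈ P, (μ (Es s)).toReal := by rw [Finset.mul_sum]
    _ = α * (μ E).toReal := by
        congr 1
        rw [← ENNReal.toReal_sum (fun s _ => measure_ne_top μ _), hEsum]
    _ ≤ (μ E).toReal * α := le_of_eq (mul_comm _ _)
end

section
/- Let S_0,...,S_T ∈ {0,1} and M_0,...,M_T ∈ {0,1} be random variables on a probability space such that for each t, E[M_t · 1{S_0=s_0,...,S_T=s_T}] ≤ α · P(S_0=s_0,...,S_T=s_T) whenever s_t = 1. Then E[ (∑_{t=0}^T S_t M_t)/(max(1, ∑_{t=0}^T S_t)) ] ≤ α. -/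
open MeasureTheory

/-- **Abstract FCR control.** `S t` are `{0,1}`-valued selection indicators and
`M t` are `{0,1}`-valued miscoverage indicators such that
`E[M_t · 1{S = s}] ≤ α · P(S = s)` for every full selection pattern `s` with
`s t = 1`.  Then the false coverage rate
`E[(∑ S_t M_t) / max(1, ∑ S_t)]` is at most `α`. -/
theorem abstract_FCR_control
    {Ω : Type*} [MeasurableSpace Ω] (μ : Measure Ω) [IsProbabilityMeasure μ]
    (T : ℕ) (S M : Fin (T + 1) → Ω → ℝ)
    (hSmeas : ∀ t, Measurable (S t)) (hMmeas : ∀ t, Measurable (M t))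
    (hS01 : ∀ t ω, S t ω = 0 ∨ S t ω = 1) (hM01 : ∀ t ω, M t ω = 0 ∨ M t ω = 1)
    (α : ℝ) (hα : 0 ≤ α)
    (hyp : ∀ (t : Fin (T + 1)) (s : Fin (T + 1) → ℝ), s t = 1 →
      ∫ ω in {ω | ∀ j, S j ω = s j}, M t ω ∂μ ≤
        α * (μ {ω | ∀ j, S j ω = s j}).toReal) :
    ∫ ω, (∑ t, S t ω * M t ω) / max 1 (∑ t, S t ω) ∂μ ≤ α := by
  classical
  set f : Ω → ℝ := fun ω => (∑ t, S t ω * M t ω) / max 1 (∑ t, S t ω) with hfdef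
  set v : Bool → ℝ := fun b => if b then 1 else 0 with hvdef
  set A : (Fin (T + 1) → Bool) → Set Ω := fun p => {ω | ∀ j, S j ω = v (p j)}
    with hAdef
  have hM0 : ∀ t ω, 0 ≤ M t ω := fun t ω => by
    rcases hM01 t ω with h | h <;> simp [h]
  have hM1 : ∀ t ω, M t ω ≤ 1 := fun t ω => by
    rcases hM01 t ω with h | h <;> simp [h]
  have hAmeas : ∀ p, MeasurableSet (A p) := by
    intro p
    have : A p = ⋂ j, (S j) ⁻¹' {v (p j)} := by
      ext ω; simp [hAdef, Set.mem_iInter]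
    rw [this]
    exact MeasurableSet.iInter fun j => (hSmeas j) (measurableSet_singleton _)
  have hdisj : Pairwise (Function.onFun Disjoint A) := by
    intro p q hpq
    simp only [Function.onFun, Set.disjoint_left]
    intro ω hp hq
    apply hpq
    funext j
    have h1 : S j ω = v (p j) := hp j
    have h2 : S j ω = v (q j) := hq j
    have : v (p j) = v (q j) := h1 ▸ h2
    cases hb : p j <;> cases hc : q j <;> simp [hvdef, hb, hc] at this ⊢
  have hcover : ⋃ p, A p = Set.univ := by
    ext ω
    simp only [Set.mem_iUnion, Set.mem_univ, iff_true]
    refine ⟨fun j => decide (S j ω = 1), fun j => ?_⟩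
    rcases hS01 j ω with h | h <;> simp [hvdef, h]
  -- integrability of each M t
  have hMint : ∀ t, Integrable (M t) μ := by
    intro t
    refine Integrable.mono' (integrable_const 1) (hMmeas t).aestronglyMeasurable
      (Filter.Eventually.of_forall fun ω => ?_)
    rw [Real.norm_eq_abs, abs_of_nonneg (hM0 t ω)]
    exact hM1 t ω
  -- measurability and integrability of f
  have hfmeas : Measurable f := by
    apply Measurable.div
    · exact Finset.measurable_sum _ fun t _ => (hSmeas t).mul (hMmeas t)
    · exact (measurable_const.max (Finset.measurable_sum _ fun t _ => hSmeas t))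
  have hfbound : ∀ ω, 0 ≤ f ω ∧ f ω ≤ (T + 1 : ℝ) := by
    intro ω
    have hden : (1 : ℝ) ≤ max 1 (∑ t, S t ω) := le_max_left _ _
    have hden0 : (0 : ℝ) < max 1 (∑ t, S t ω) := lt_of_lt_of_le one_pos hden
    have hnum0 : 0 ≤ ∑ t, S t ω * M t ω := by
      apply Finset.sum_nonneg
      intro t _
      rcases hS01 t ω with h | h <;> simp [h, hM0 t ω]
    have hnum1 : ∑ t, S t ω * M t ω ≤ (T + 1 : ℝ) := by
      calc ∑ t, S t ω * M t ω ≤ ∑ t : Fin (T + 1), (1 : ℝ) := by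
            apply Finset.sum_le_sum
            intro t _
            rcases hS01 t ω with h | h
            · simp [h]
            · simpa [h] using hM1 t ω
        _ = (T + 1 : ℝ) := by simp
    constructor
    · exact div_nonneg hnum0 hden0.le
    · calc f ω ≤ (∑ t, S t ω * M t ω) / 1 := by
            apply div_le_div_of_nonneg_left hnum0 one_pos hden
        _ ≤ (T + 1 : ℝ) := by simpa using hnum1
  have hfint : Integrable f μ := by
    refine Integrable.mono' (integrable_const ((T + 1 : ℝ))) hfmeas.aestronglyMeasurable
      (Filter.Eventually.of_forall fun ω => ?_)
    rw [Real.norm_eq_abs, abs_of_nonneg (hfbound ω).1]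
    exact (hfbound ω).2
  -- decompose the integral
  have hsplit : ∫ ω, f ω ∂μ = ∑ p : Fin (T + 1) → Bool, ∫ ω in A p, f ω ∂μ := by
    rw [← setIntegral_univ (f := f), ← hcover]
    exact integral_iUnion_fintype hAmeas hdisj fun p => hfint.integrableOn
  rw [show (∫ ω, (∑ t, S t ω * M t ω) / max 1 (∑ t, S t ω) ∂μ) = ∫ ω, f ω ∂μ from rfl,
    hsplit]
  -- bound each piece
  have hpiece : ∀ p : Fin (T + 1) → Bool,
      ∫ ω in A p, f ω ∂μ ≤ α * (μ (A p)).toReal := by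
    intro p
    set n : ℝ := ∑ j, v (p j) with hndef
    have hn0 : 0 ≤ n := Finset.sum_nonneg fun j _ => by cases p j <;> simp [hvdef]
    have hcongr : ∫ ω in A p, f ω ∂μ
        = ∫ ω in A p, (∑ t, v (p t) * M t ω) / max 1 n ∂μ := by
      apply setIntegral_congr_fun (hAmeas p)
      intro ω hω
      have hs : ∀ j, S j ω = v (p j) := hω
      simp only [hfdef]
      congr 1
      · exact Finset.sum_congr rfl fun t _ => by rw [hs t]
      · congr 1
        exact Finset.sum_congr rfl fun t _ => hs t
    rw [hcongr]
    have hdiv : ∫ ω in A p, (∑ t, v (p t) * M t ω) / max 1 n ∂μ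
        = (∑ t, v (p t) * ∫ ω in A p, M t ω ∂μ) / max 1 n := by
      rw [integral_div]
      congr 1
      rw [integral_finset_sum]
      · exact Finset.sum_congr rfl fun t _ => by
          rw [integral_const_mul]
      · exact fun t _ => ((hMint t).const_mul _).integrableOn
    rw [hdiv]
    have hbd : ∑ t, v (p t) * ∫ ω in A p, M t ω ∂μ
        ≤ n * (α * (μ (A p)).toReal) := by
      rw [hndef, Finset.sum_mul]
      apply Finset.sum_le_sum
      intro t _
      cases hpt : p t
      · simp [hvdef]
      · simp only [hvdef, if_true, one_mul]
        have := hyp t (fun j => v (p j)) (by simp [hvdef, hpt])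
        exact this
    have hden : (1 : ℝ) ≤ max 1 n := le_max_left _ _
    have hden0 : (0 : ℝ) < max 1 n := lt_of_lt_of_le one_pos hden
    calc (∑ t, v (p t) * ∫ ω in A p, M t ω ∂μ) / max 1 n
        ≤ (n * (α * (μ (A p)).toReal)) / max 1 n :=
          div_le_div_of_nonneg_right hbd hden0.le
      _ ≤ α * (μ (A p)).toReal := by
          rw [div_le_iff₀ hden0]
          have hαμ : 0 ≤ α * (μ (A p)).toReal :=
            mul_nonneg hα ENNReal.toReal_nonneg
          have : n ≤ max 1 n := le_max_right _ _
          nlinarith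
  calc ∑ p : Fin (T + 1) → Bool, ∫ ω in A p, f ω ∂μ
      ≤ ∑ p : Fin (T + 1) → Bool, α * (μ (A p)).toReal :=
        Finset.sum_le_sum fun p _ => hpiece p
    _ = α * ∑ p : Fin (T + 1) → Bool, (μ (A p)).toReal := by
        rw [Finset.mul_sum]
    _ = α * (μ (Set.univ : Set Ω)).toReal := by
        congr 1
        rw [← hcover, measure_iUnion hdisj hAmeas, tsum_fintype,
          ENNReal.toReal_sum]
        exact fun p _ => measure_ne_top μ _
    _ = α := by simp
end

section
/- Suppose strong selection-conditional coverage holds exactly with equality, i.e., P(Y_t ∈ Ĉ_t(X_t) | S_0=s_0,...,S_{t-1}=s_{t-1},S_t=1) = 1−α for all t ≤ T and all realizable patterns, and suppose P(∑_{t=0}^T S_t > 0) = 1. Then FCR(T) = E[(∑_{t=0}^T S_t 1{Y_t ∉ Ĉ_t(X_t)})/(max(1,∑_{t=0}^T S_t))] = α. -/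
open MeasureTheory ProbabilityTheory

/-- **Exact FCR under exact strong selection-conditional coverage.** If coverage
conditional on any past selection pattern together with `S_t = 1` is exactly `1 - α`,
future selections are conditionally independent of the coverage event given the
selections up to time `t`, and almost surely at least one selection is made, then
`FCR(T) = α`. -/
theorem FCR_eq_of_exact_strong_selection_conditional_coverage
    {Ω : Type*} [MeasurableSpace Ω] (μ : Measure Ω) [IsProbabilityMeasure μ]
    (T : ℕ) (S : Fin (T + 1) → Ω → Bool) (hS : ∀ t, Measurable (S t))
    (A : Fin (T + 1) → Set Ω) (hA : ∀ t, MeasurableSet (A t))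
    (α : ℝ) (hα : α ∈ Set.Icc (0 : ℝ) 1)
    (hcov : ∀ (t : Fin (T + 1)) (s : Fin (T + 1) → Bool),
      μ {ω | (∀ j, j < t → S j ω = s j) ∧ S t ω = true} ≠ 0 →
      μ[|{ω | (∀ j, j < t → S j ω = s j) ∧ S t ω = true}] (A t)ᶜ =
        ENNReal.ofReal (1 - α))
    (hind : ∀ (t : Fin (T + 1)) (s : Fin (T + 1) → Bool),
      μ (A t ∩ {ω | ∀ j, S j ω = s j}) * μ {ω | ∀ j, j ≤ t → S j ω = s j} =
        μ (A t ∩ {ω | ∀ j, j ≤ t → S j ω = s j}) * μ {ω | ∀ j, S j ω = s j})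
    (hpos : μ {ω | ∃ t, S t ω = true} = 1) :
    ∫ ω, (∑ t, if S t ω then (A t).indicator (fun _ => (1 : ℝ)) ω else 0) /
        max 1 (∑ t, if S t ω then (1 : ℝ) else 0) ∂μ = α := by
  classical
  set E : (Fin (T + 1) → Bool) → Set Ω := fun s => {ω | ∀ j, S j ω = s j} with hE
  set B : Fin (T + 1) → (Fin (T + 1) → Bool) → Set Ω :=
    fun t s => {ω | ∀ j, j ≤ t → S j ω = s j} with hB
  have hEmeas : ∀ s, MeasurableSet (E s) := by
    intro s
    have : E s = ⋂ j, S j ⁻¹' {s j} := by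
      ext ω; simp [hE, Set.mem_iInter]
    rw [this]
    exact MeasurableSet.iInter fun j => (hS j) (measurableSet_singleton _)
  have hBmeas : ∀ t s, MeasurableSet (B t s) := by
    intro t s
    have : B t s = ⋂ j, ⋂ (_ : j ≤ t), S j ⁻¹' {s j} := by
      ext ω; simp [hB, Set.mem_iInter]
    rw [this]
    exact MeasurableSet.iInter fun j => MeasurableSet.iInter fun _ =>
      (hS j) (measurableSet_singleton _)
  -- the key probabilistic identity
  have key : ∀ (t : Fin (T + 1)) (s : Fin (T + 1) → Bool), s t = true →
      μ (A t ∩ E s) = ENNReal.ofReal α * μ (E s) := by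
    intro t s hst
    have hBeq : {ω | (∀ j, j < t → S j ω = s j) ∧ S t ω = true} = B t s := by
      ext ω
      constructor
      · rintro ⟨h1, h2⟩ j hj
        rcases lt_or_eq_of_le hj with hj' | hj'
        · exact h1 j hj'
        · rw [hj', h2, hst]
      · intro h
        exact ⟨fun j hj => h j hj.le, (h t le_rfl).trans hst⟩
    by_cases hB0 : μ (B t s) = 0
    · have hEsub : E s ⊆ B t s := fun ω h j _ => h j
      have hE0 : μ (E s) = 0 := measure_mono_null hEsub hB0
      have : μ (A t ∩ E s) = 0 :=
        measure_mono_null Set.inter_subset_right hE0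
      rw [this, hE0, mul_zero]
    · have hB0' : μ {ω | (∀ j, j < t → S j ω = s j) ∧ S t ω = true} ≠ 0 := by
        rw [hBeq]; exact hB0
      have hc := hcov t s hB0'
      rw [hBeq] at hc
      haveI : IsProbabilityMeasure (μ[|B t s]) := cond_isProbabilityMeasure hB0
      have hcompl : (μ[|B t s]) (A t) = ENNReal.ofReal α := by
        have h1 : (μ[|B t s]) (A t)ᶜ = 1 - (μ[|B t s]) (A t) :=
          prob_compl_eq_one_sub (hA t)
        have h2 : (μ[|B t s]) (A t) ≤ 1 := prob_le_one
        have h3 : (1 : ENNReal) - (1 - (μ[|B t s]) (A t)) = (μ[|B t s]) (A t) :=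
          ENNReal.sub_sub_cancel ENNReal.one_ne_top h2
        rw [← h3, ← h1, hc]
        rw [← ENNReal.ofReal_one, ← ENNReal.ofReal_sub _ (by linarith [hα.2])]
        norm_num
      have hApply : (μ[|B t s]) (A t) = (μ (B t s))⁻¹ * μ (B t s ∩ A t) :=
        cond_apply (hBmeas t s) μ (A t)
      have hBfin : μ (B t s) ≠ ⊤ := measure_ne_top μ _
      have hmul : μ (A t ∩ B t s) = ENNReal.ofReal α * μ (B t s) := by
        rw [Set.inter_comm]
        calc μ (B t s ∩ A t) = μ (B t s) * ((μ (B t s))⁻¹ * μ (B t s ∩ A t)) := by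
              rw [← mul_assoc, ENNReal.mul_inv_cancel hB0 hBfin, one_mul]
          _ = ENNReal.ofReal α * μ (B t s) := by
              rw [← hApply, hcompl, mul_comm]
      have hi := hind t s
      rw [hmul] at hi
      -- hi : μ (A t ∩ E s) * μ (B t s) = ENNReal.ofReal α * μ (B t s) * μ (E s)
      have heq : μ (A t ∩ E s) * μ (B t s) = (ENNReal.ofReal α * μ (E s)) * μ (B t s) := by
        rw [hi]; ring
      calc μ (A t ∩ E s) = μ (A t ∩ E s) * μ (B t s) * (μ (B t s))⁻¹ := by
            rw [mul_assoc, ENNReal.mul_inv_cancel hB0 hBfin, mul_one]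
        _ = ENNReal.ofReal α * μ (E s) * μ (B t s) * (μ (B t s))⁻¹ := by rw [heq]
        _ = ENNReal.ofReal α * μ (E s) := by
            rw [mul_assoc, ENNReal.mul_inv_cancel hB0 hBfin, mul_one]
  -- notation for the coefficient
  set N : (Fin (T + 1) → Bool) → ℝ := fun s => ∑ u, if s u then (1 : ℝ) else 0 with hN
  set c : (Fin (T + 1) → Bool) → Fin (T + 1) → ℝ :=
    fun s t => (if s t then (1 : ℝ) else 0) / max 1 (N s) with hc
  -- pointwise rewrite
  have hfun : ∀ ω, (∑ t, if S t ω then (A t).indicator (fun _ => (1 : ℝ)) ω else 0) /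
      max 1 (∑ t, if S t ω then (1 : ℝ) else 0) =
      ∑ s : Fin (T + 1) → Bool, ∑ t, Set.indicator (A t ∩ E s) (fun _ => c s t) ω := by
    intro ω
    have hmem : ω ∈ E (fun j => S j ω) := fun j => rfl
    rw [Fintype.sum_eq_single (fun j => S j ω)]
    · have hNeq : N (fun j => S j ω) = ∑ t, if S t ω then (1 : ℝ) else 0 := rfl
      rw [Finset.sum_div]
      refine Finset.sum_congr rfl fun t _ => ?_
      by_cases ht : S t ω
      · by_cases hAt : ω ∈ A t
        · simp [Set.indicator, ht, hAt, hmem, hc, hNeq]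
        · simp [Set.indicator, ht, hAt, hc, hNeq]
      · simp [Set.indicator, ht, hc, hNeq]
    · intro s hs
      have : ω ∉ E s := by
        intro h
        exact hs (funext fun j => (h j).symm)
      refine Finset.sum_eq_zero fun t _ => ?_
      exact Set.indicator_of_notMem (fun h => this h.2) _
  rw [integral_congr_ae (Filter.Eventually.of_forall hfun)]
  have hint : ∀ (s : Fin (T + 1) → Bool) (t : Fin (T + 1)),
      Integrable (fun ω => Set.indicator (A t ∩ E s) (fun _ => c s t) ω) μ :=
    fun s t => (integrable_const (c s t)).indicator ((hA t).inter (hEmeas s))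
  rw [integral_finset_sum _ fun s _ => integrable_finset_sum _ fun t _ => hint s t]
  have hint2 : ∀ s : Fin (T + 1) → Bool,
      ∫ ω, ∑ t, Set.indicator (A t ∩ E s) (fun _ => c s t) ω ∂μ =
      ∑ t, (μ (A t ∩ E s)).toReal * c s t := by
    intro s
    rw [integral_finset_sum _ fun t _ => hint s t]
    refine Finset.sum_congr rfl fun t _ => ?_
    rw [integral_indicator_const _ ((hA t).inter (hEmeas s))]
    simp [mul_comm, measureReal_def]
  simp_rw [hint2]
  -- evaluate each inner sum
  have hzero : μ (E (fun _ => false)) = 0 := by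
    have hcompl : {ω | ∃ t, S t ω = true}ᶜ = E (fun _ => false) := by
      ext ω; simp [hE]
    have := prob_compl_eq_one_sub (μ := μ)
      (s := {ω | ∃ t, S t ω = true}) ?_
    · rw [hcompl, hpos] at this
      simpa using this
    · have : {ω | ∃ t, S t ω = true} = ⋃ t, S t ⁻¹' {true} := by
        ext ω; simp
      rw [this]
      exact MeasurableSet.iUnion fun t => (hS t) (measurableSet_singleton _)
  have hinner : ∀ s : Fin (T + 1) → Bool,
      ∑ t, (μ (A t ∩ E s)).toReal * c s t = α * (μ (E s)).toReal := by
    intro s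
    by_cases hsex : ∃ t, s t = true
    · have hN1 : (1 : ℝ) ≤ N s := by
        obtain ⟨t, ht⟩ := hsex
        calc (1 : ℝ) = if s t then (1 : ℝ) else 0 := by simp [ht]
          _ ≤ N s := Finset.single_le_sum
            (f := fun u => if s u then (1 : ℝ) else 0)
            (fun u _ => by positivity) (Finset.mem_univ t)
      have hNne : N s ≠ 0 := by linarith
      have hmax : max 1 (N s) = N s := max_eq_right hN1
      have hterm : ∀ t, (μ (A t ∩ E s)).toReal * c s t =
          (if s t then (1 : ℝ) else 0) * (α * (μ (E s)).toReal / N s) := by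
        intro t
        by_cases hst : s t
        · rw [key t s hst, hc]
          simp only [hst, if_true, one_mul]
          rw [ENNReal.toReal_mul, ENNReal.toReal_ofReal hα.1, hmax]
          ring
        · simp [hc, hst]
      simp_rw [hterm]
      rw [← Finset.sum_mul,
        show (∑ i : Fin (T + 1), if s i = true then (1 : ℝ) else 0) = N s from rfl]
      field_simp
    · push_neg at hsex
      have hsf : s = fun _ => false := funext fun t => by
        cases h : s t
        · rfl
        · exact absurd h (by simp [hsex t])
      subst hsf
      rw [hzero]
      simp [hc]
  simp_rw [hinner]
  rw [← Finset.mul_sum]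
  -- sum of measures over all patterns is 1
  have hpart : ∑ s : Fin (T + 1) → Bool, μ (E s) = 1 := by
    have hdisj : Pairwise (Function.onFun Disjoint E) := by
      intro s s' hss'
      rw [Function.onFun, Set.disjoint_left]
      intro ω hω hω'
      exact hss' (funext fun j => (hω j).symm.trans (hω' j))
    have hcover : ⋃ s, E s = Set.univ := by
      ext ω
      simp only [Set.mem_iUnion, Set.mem_univ, iff_true]
      exact ⟨fun j => S j ω, fun j => rfl⟩
    have := measure_iUnion hdisj hEmeas (μ := μ)
    rw [hcover, tsum_fintype] at this
    rw [← this, measure_univ]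
  have : ∑ s : Fin (T + 1) → Bool, (μ (E s)).toReal = 1 := by
    rw [← ENNReal.toReal_sum fun s _ => measure_ne_top μ _, hpart, ENNReal.toReal_one]
  rw [this, mul_one]
end

section
/- Consider the conformal LORD-CI procedure: at each time t, a level α_t ∈ (0,1) measurable with respect to F_{t-1} = σ(S_0,...,S_{t-1}) is chosen, and the miscoverage event M_t = 1{R_t > Q̂_{1−α_t}({R_i}_{i ∈ J_off})} satisfies E[M_t | F^{T∖t}] ≤ α_t where F^{T∖t} = σ(S_0,...,S_{t-1},S_{t+1},...,S_T). Suppose the invariant ∑_{t=0}^T α_t ≤ α · max(1, ∑_{t=0}^T S_t) holds almost surely for all T, the selection rules are monotone in the sense that replacing S_t by 1 can only increase ∑_j S_j, and S_t ∈ {0,1}. Then FCR(T) = E[(∑_{t=0}^T S_t M_t)/(max(1,∑_{t=0}^T S_t))] ≤ α for all T ≥ 0. -/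
open MeasureTheory

/-- Miscoverage indicator of conformal LORD-CI at a time point:
`M = 1{R_t > Q̂_{1-α_t}({R_i}_{i ∈ J_off})}`. -/
noncomputable def miscover {Ω : Type*} (k : ℕ) (Roff : Fin k → Ω → ℝ)
    (Rt : Ω → ℝ) (a : Ω → ℝ) (ω : Ω) : ℝ :=
  if empQuantile k (fun i => Roff i ω) (1 - a ω) < (Rt ω : EReal) then 1 else 0

lemma empQuantile_lt_coe_iff (m : ℕ) (z : Fin m → ℝ) (b r : ℝ) :
    empQuantile m z b < (r : EReal) ↔
      b ≤ ((Finset.univ.filter (fun i => z i < r)).card : ℝ) / m := by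
  unfold empQuantile
  rw [sInf_lt_iff]
  constructor
  · rintro ⟨q, hq, hqr⟩
    refine hq.trans ?_
    have hsub : (Finset.univ.filter (fun i => (z i : EReal) ≤ q)) ⊆
        (Finset.univ.filter (fun i => z i < r)) := by
      intro i hi
      simp only [Finset.mem_filter, Finset.mem_univ, true_and] at hi ⊢
      exact_mod_cast lt_of_le_of_lt hi hqr
    have := Finset.card_le_card hsub
    rw [div_eq_mul_inv, div_eq_mul_inv]
    exact mul_le_mul_of_nonneg_right (by exact_mod_cast this) (by positivity)
  · intro hb
    set A := Finset.univ.filter (fun i => z i < r) with hA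
    rcases A.eq_empty_or_nonempty with hAe | hAne
    · refine ⟨⊥, ?_, ?_⟩
      · simp only [Set.mem_setOf_eq]
        have : (Finset.univ.filter (fun i => (z i : EReal) ≤ (⊥ : EReal))) = ∅ := by
          apply Finset.filter_false_of_mem
          intro i _
          simp [EReal.coe_ne_bot]
        rw [this]
        simpa [hAe] using hb
      · exact bot_lt_iff_ne_bot.2 (EReal.coe_ne_bot r)
    · set x := (A.image z).max' (hAne.image z) with hxdef
      have hxmem : x ∈ A.image z := (A.image z).max'_mem _
      obtain ⟨i, hiA, hix⟩ := Finset.mem_image.1 hxmem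
      have hxr : x < r := by
        rw [← hix]; exact (Finset.mem_filter.1 hiA).2
      refine ⟨(x : EReal), ?_, by exact_mod_cast hxr⟩
      simp only [Set.mem_setOf_eq]
      refine hb.trans ?_
      have hsub : A ⊆ Finset.univ.filter (fun i => (z i : EReal) ≤ (x : EReal)) := by
        intro j hj
        simp only [Finset.mem_filter, Finset.mem_univ, true_and]
        exact_mod_cast Finset.le_max' _ _ (Finset.mem_image_of_mem z hj)
      have := Finset.card_le_card hsub
      rw [div_eq_mul_inv, div_eq_mul_inv]
      exact mul_le_mul_of_nonneg_right (by exact_mod_cast this) (by positivity)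


lemma miscover_eq {Ω : Type*} (k : ℕ) (Roff : Fin k → Ω → ℝ)
    (Rt : Ω → ℝ) (a : Ω → ℝ) (ω : Ω) :
    miscover k Roff Rt a ω =
      if (1 - a ω) ≤ ((Finset.univ.filter (fun i => Roff i ω < Rt ω)).card : ℝ) / k
      then 1 else 0 := by
  unfold miscover
  rw [if_congr (empQuantile_lt_coe_iff k (fun i => Roff i ω) (1 - a ω) (Rt ω)) rfl rfl]

lemma miscover_measurable {Ω : Type*} [MeasurableSpace Ω] (k : ℕ)
    (Roff : Fin k → Ω → ℝ) (Rt : Ω → ℝ) (a : Ω → ℝ)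
    (hRoff : ∀ i, Measurable (Roff i)) (hRt : Measurable Rt) (ha : Measurable a) :
    Measurable (miscover k Roff Rt a) := by
  have : miscover k Roff Rt a = fun ω =>
      if (1 - a ω) ≤ ((Finset.univ.filter (fun i => Roff i ω < Rt ω)).card : ℝ) / k
      then 1 else 0 := funext fun ω => miscover_eq k Roff Rt a ω
  rw [this]
  have hc : Measurable (fun ω =>
      ((Finset.univ.filter (fun i => Roff i ω < Rt ω)).card : ℝ) / k) := by
    have : (fun ω => ((Finset.univ.filter (fun i => Roff i ω < Rt ω)).card : ℝ))
        = fun ω => ∑ i : Fin k, if Roff i ω < Rt ω then (1:ℝ) else 0 := by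
      funext ω
      rw [Finset.card_filter]
      push_cast
      simp [apply_ite (fun n : ℕ => (n : ℝ))]
    refine Measurable.div ?_ measurable_const
    rw [this]
    exact Finset.measurable_sum _ fun i _ =>
      Measurable.ite (measurableSet_lt (hRoff i) hRt) measurable_const measurable_const
  exact Measurable.ite (measurableSet_le ((measurable_const.sub ha)) hc)
    measurable_const measurable_const

lemma miscover_nonneg {Ω : Type*} (k : ℕ) (Roff : Fin k → Ω → ℝ)
    (Rt : Ω → ℝ) (a : Ω → ℝ) (ω : Ω) : 0 ≤ miscover k Roff Rt a ω := by
  unfold miscover; split <;> norm_num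

lemma miscover_le_one {Ω : Type*} (k : ℕ) (Roff : Fin k → Ω → ℝ)
    (Rt : Ω → ℝ) (a : Ω → ℝ) (ω : Ω) : miscover k Roff Rt a ω ≤ 1 := by
  unfold miscover; split <;> norm_num


/-- **FCR control of conformal LORD-CI.** At each time `t` a level `α_t ∈ (0,1)`,
measurable w.r.t. the past selections `σ(S_0,…,S_{t-1})`, is chosen; the miscoverage
indicator `M_t = 1{R_t > Q̂_{1-α_t}(offline scores)}` satisfies
`E[M_t ∣ F^{T∖t}] ≤ α_t` where `F^{T∖t} = σ(S_j : j ≠ t)`; and the invariant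
`∑_{t≤s} α_t ≤ α · max(1, ∑_{t≤s} S_t)` holds almost surely for every horizon `s`.
Then `FCR(T) ≤ α`. -/
theorem lordCI_FCR_control
    {Ω : Type*} [m0 : MeasurableSpace Ω] (μ : Measure Ω) [IsProbabilityMeasure μ]
    (T k : ℕ) (S : Fin (T + 1) → Ω → Bool) (hS : ∀ t, Measurable (S t))
    (αt : Fin (T + 1) → Ω → ℝ)
    (Roff : Fin k → Ω → ℝ) (R : Fin (T + 1) → Ω → ℝ)
    (hRoff : ∀ i, Measurable (Roff i)) (hR : ∀ t, Measurable (R t))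
    (α : ℝ)
    (hα01 : ∀ t ω, αt t ω ∈ Set.Ioo (0 : ℝ) 1)
    (hαmeas : ∀ t : Fin (T + 1),
      Measurable[MeasurableSpace.comap
        (fun ω => fun j : { j : Fin (T + 1) // j < t } => S j.1 ω)
        MeasurableSpace.pi] (αt t))
    (hM : ∀ t : Fin (T + 1),
      (μ[miscover k Roff (R t) (αt t) |
        MeasurableSpace.comap
          (fun ω => fun j : { j : Fin (T + 1) // j ≠ t } => S j.1 ω)
          MeasurableSpace.pi]) ≤ᵐ[μ] αt t)
    (hinv : ∀ᵐ ω ∂μ, ∀ s : Fin (T + 1),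
      ∑ t ∈ Finset.univ.filter (· ≤ s), αt t ω ≤
        α * max 1 (∑ t ∈ Finset.univ.filter (· ≤ s), if S t ω then (1 : ℝ) else 0)) :
    ∫ ω, (∑ t, if S t ω then miscover k Roff (R t) (αt t) ω else 0) /
        max 1 (∑ t, if S t ω then (1 : ℝ) else 0) ∂μ ≤ α := by
  classical
  set Mt : Fin (T + 1) → Ω → ℝ := fun t => miscover k Roff (R t) (αt t) with hMtdef
  set sel : Fin (T + 1) → Ω → ℝ := fun t ω => if S t ω then (1 : ℝ) else 0 with hseldef
  set D : Ω → ℝ := fun ω => max 1 (∑ t, sel t ω) with hDdef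
  set N : Fin (T + 1) → Ω → ℝ :=
    fun t ω => 1 + ∑ j ∈ Finset.univ.erase t, sel j ω with hNdef
  set g : Fin (T + 1) → Ω → ℝ := fun t ω => (N t ω)⁻¹ with hgdef
  set m' : Fin (T + 1) → MeasurableSpace Ω := fun t =>
    MeasurableSpace.comap (fun ω => fun j : { j : Fin (T + 1) // j ≠ t } => S j.1 ω)
      MeasurableSpace.pi with hm'def
  -- basic facts
  have hselmem : ∀ t, MeasurableSet {ω | S t ω = true} :=
    fun t => (hS t) (measurableSet_singleton true)
  have hselmeas : ∀ t, Measurable (sel t) :=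
    fun t => Measurable.ite (hselmem t) measurable_const measurable_const
  have hsel0 : ∀ t ω, 0 ≤ sel t ω := by
    intro t ω; simp only [hseldef]; split <;> norm_num
  have hD1 : ∀ ω, 1 ≤ D ω := fun ω => le_max_left _ _
  have hDpos : ∀ ω, 0 < D ω := fun ω => lt_of_lt_of_le one_pos (hD1 ω)
  have hDmeas : Measurable D :=
    measurable_const.max (Finset.measurable_sum _ fun t _ => hselmeas t)
  have hN1 : ∀ t ω, 1 ≤ N t ω := by
    intro t ω
    simp only [hNdef]
    have : 0 ≤ ∑ j ∈ Finset.univ.erase t, sel j ω :=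
      Finset.sum_nonneg fun j _ => hsel0 j ω
    linarith
  have hNpos : ∀ t ω, 0 < N t ω := fun t ω => lt_of_lt_of_le one_pos (hN1 t ω)
  have hNmeas : ∀ t, Measurable (N t) :=
    fun t => measurable_const.add (Finset.measurable_sum _ fun j _ => hselmeas j)
  have hNeqD : ∀ t ω, S t ω = true → D ω = N t ω := by
    intro t ω hSt
    have hsum : ∑ j, sel j ω = N t ω := by
      rw [← Finset.add_sum_erase _ _ (Finset.mem_univ t)]
      simp only [hseldef, hNdef, if_pos hSt]
    simp only [hDdef, hsum]
    exact max_eq_right (hN1 t ω)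
  have hDleN : ∀ t ω, D ω ≤ N t ω := by
    intro t ω
    by_cases hSt : S t ω = true
    · exact (hNeqD t ω hSt).le
    · have hsum : ∑ j, sel j ω = ∑ j ∈ Finset.univ.erase t, sel j ω := by
        rw [← Finset.add_sum_erase _ _ (Finset.mem_univ t)]
        simp only [hseldef, if_neg hSt, zero_add]
      refine max_le (hN1 t ω) ?_
      rw [hsum, hNdef]
      simp only
      linarith
  have hg0 : ∀ t ω, 0 ≤ g t ω := fun t ω => inv_nonneg.2 (hNpos t ω).le
  have hg1 : ∀ t ω, g t ω ≤ 1 := by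
    intro t ω
    simpa only [hgdef] using inv_le_one_of_one_le₀ (hN1 t ω)
  have hgmeas : ∀ t, Measurable (g t) := fun t => (hNmeas t).inv
  -- measurability of αt with respect to m0
  have hcomapLt_le : ∀ t : Fin (T + 1),
      MeasurableSpace.comap
        (fun ω => fun j : { j : Fin (T + 1) // j < t } => S j.1 ω)
        MeasurableSpace.pi ≤ m0 :=
    fun t => Measurable.comap_le (measurable_pi_lambda _ fun j => hS j.1)
  have hαm0 : ∀ t, Measurable (αt t) := fun t => (hαmeas t).mono (hcomapLt_le t) le_rfl
  have hm'le : ∀ t, m' t ≤ m0 :=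
    fun t => Measurable.comap_le (measurable_pi_lambda _ fun j => hS j.1)
  -- strong measurability of g t w.r.t. m' t
  have hgSM : ∀ t, StronglyMeasurable[m' t] (g t) := by
    intro t
    have hproj : Measurable[m' t]
        (fun ω => fun j : { j : Fin (T + 1) // j ≠ t } => S j.1 ω) :=
      Measurable.of_comap_le le_rfl
    have hh : Measurable (fun v : ({ j : Fin (T + 1) // j ≠ t } → Bool) =>
        (1 + ∑ j : { j : Fin (T + 1) // j ≠ t }, if v j then (1 : ℝ) else 0)⁻¹) :=
      measurable_of_countable _
    have heq : g t = (fun v : ({ j : Fin (T + 1) // j ≠ t } → Bool) =>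
        (1 + ∑ j : { j : Fin (T + 1) // j ≠ t }, if v j then (1 : ℝ) else 0)⁻¹) ∘
        (fun ω => fun j : { j : Fin (T + 1) // j ≠ t } => S j.1 ω) := by
      funext ω
      have hsum : ∑ j ∈ Finset.univ.erase t, sel j ω
          = ∑ j : { j : Fin (T + 1) // j ≠ t }, sel j.1 ω :=
        Finset.sum_subtype (p := fun j => j ≠ t) (Finset.univ.erase t)
          (fun x => by simp [Finset.mem_erase]) (fun j => sel j ω)
      simp only [hgdef, hNdef, Function.comp]
      rw [hsum]
    rw [heq]
    exact (hh.comp hproj).stronglyMeasurable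
  -- strong measurability of αt t w.r.t. m' t
  have hαSM : ∀ t, StronglyMeasurable[m' t] (αt t) := by
    intro t
    have hr : Measurable (fun v : ({ j : Fin (T + 1) // j ≠ t } → Bool) =>
        fun j : { j : Fin (T + 1) // j < t } => v ⟨j.1, ne_of_lt j.2⟩) :=
      measurable_of_countable _
    have hle : MeasurableSpace.comap
        (fun ω => fun j : { j : Fin (T + 1) // j < t } => S j.1 ω)
        MeasurableSpace.pi ≤ m' t := by
      have hcomp : (fun ω => fun j : { j : Fin (T + 1) // j < t } => S j.1 ω)
          = (fun v : ({ j : Fin (T + 1) // j ≠ t } → Bool) =>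
              fun j : { j : Fin (T + 1) // j < t } => v ⟨j.1, ne_of_lt j.2⟩) ∘
            (fun ω => fun j : { j : Fin (T + 1) // j ≠ t } => S j.1 ω) := rfl
      rw [hcomp, ← MeasurableSpace.comap_comp]
      exact MeasurableSpace.comap_mono (Measurable.comap_le hr)
    exact ((hαmeas t).mono hle le_rfl).stronglyMeasurable
  -- integrability helper
  have hInt : ∀ f : Ω → ℝ, Measurable f → (∀ ω, |f ω| ≤ 1) → Integrable f μ := by
    intro f hf hb
    exact Integrable.mono' (integrable_const 1) hf.aestronglyMeasurable
      (Filter.Eventually.of_forall fun ω => by simpa [Real.norm_eq_abs] using hb ω)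
  have hMmeas : ∀ t, Measurable (Mt t) :=
    fun t => miscover_measurable k Roff (R t) (αt t) hRoff (hR t) (hαm0 t)
  have hM0 : ∀ t ω, 0 ≤ Mt t ω := fun t ω => miscover_nonneg k Roff (R t) (αt t) ω
  have hM1 : ∀ t ω, Mt t ω ≤ 1 := fun t ω => miscover_le_one k Roff (R t) (αt t) ω
  -- integrability facts
  have hint1 : ∀ t, Integrable (fun ω => (if S t ω then Mt t ω else 0) / D ω) μ := by
    intro t
    refine hInt _ (Measurable.div
      (Measurable.ite (hselmem t) (hMmeas t) measurable_const) hDmeas) ?_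
    intro ω
    rw [abs_div, abs_of_pos (hDpos ω), div_le_one (hDpos ω)]
    refine le_trans ?_ (hD1 ω)
    split
    · rw [abs_of_nonneg (hM0 t ω)]; exact hM1 t ω
    · simp
  have hint2 : ∀ t, Integrable (fun ω => g t ω * Mt t ω) μ := by
    intro t
    refine hInt _ ((hgmeas t).mul (hMmeas t)) fun ω => ?_
    rw [abs_of_nonneg (mul_nonneg (hg0 t ω) (hM0 t ω))]
    exact mul_le_one₀ (hg1 t ω) (hM0 t ω) (hM1 t ω)
  have hint3 : ∀ t, Integrable (fun ω => g t ω * αt t ω) μ := by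
    intro t
    refine hInt _ ((hgmeas t).mul (hαm0 t)) fun ω => ?_
    rw [abs_of_nonneg (mul_nonneg (hg0 t ω) (hα01 t ω).1.le)]
    exact mul_le_one₀ (hg1 t ω) (hα01 t ω).1.le (hα01 t ω).2.le
  have hintM : ∀ t, Integrable (Mt t) μ := by
    intro t
    refine hInt _ (hMmeas t) fun ω => ?_
    rw [abs_of_nonneg (hM0 t ω)]; exact hM1 t ω
  -- key pointwise inequalities
  have key1 : ∀ t ω, (if S t ω then Mt t ω else 0) / D ω ≤ g t ω * Mt t ω := by
    intro t ω
    by_cases hSt : S t ω = true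
    · rw [if_pos hSt, hNeqD t ω hSt]
      rw [div_eq_mul_inv, mul_comm]
    · rw [if_neg hSt, zero_div]
      exact mul_nonneg (hg0 t ω) (hM0 t ω)
  have key2 : ∀ t ω, g t ω * αt t ω ≤ αt t ω / D ω := by
    intro t ω
    rw [mul_comm, ← div_eq_mul_inv]
    exact div_le_div_of_nonneg_left (hα01 t ω).1.le (hDpos ω) (hDleN t ω)
  -- main chain
  have step1 : ∫ ω, (∑ t, if S t ω then Mt t ω else 0) / D ω ∂μ
      = ∑ t, ∫ ω, (if S t ω then Mt t ω else 0) / D ω ∂μ := by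
    rw [← integral_finset_sum _ fun t _ => hint1 t]
    congr 1
    funext ω
    rw [Finset.sum_div]
  have step2 : ∀ t, ∫ ω, (if S t ω then Mt t ω else 0) / D ω ∂μ
      ≤ ∫ ω, g t ω * Mt t ω ∂μ :=
    fun t => integral_mono (hint1 t) (hint2 t) fun ω => key1 t ω
  have step3 : ∀ t, ∫ ω, g t ω * Mt t ω ∂μ ≤ ∫ ω, g t ω * αt t ω ∂μ := by
    intro t
    have hpull : μ[fun ω => g t ω * Mt t ω | m' t] =ᵐ[μ]
        fun ω => g t ω * (μ[Mt t | m' t]) ω :=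
      condExp_mul_of_stronglyMeasurable_left (hgSM t) (hint2 t) (hintM t)
    have h1 : ∫ ω, g t ω * Mt t ω ∂μ = ∫ ω, (μ[fun ω => g t ω * Mt t ω | m' t]) ω ∂μ :=
      (integral_condExp (hm'le t)).symm
    rw [h1, integral_congr_ae hpull]
    refine integral_mono_ae ?_ (hint3 t) ?_
    · exact (integrable_condExp).bdd_mul ((hgmeas t).aestronglyMeasurable)
        (Filter.Eventually.of_forall fun ω => by
          rw [Real.norm_eq_abs, abs_of_nonneg (hg0 t ω)]; exact hg1 t ω)
    · filter_upwards [hM t] with ω hω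
      exact mul_le_mul_of_nonneg_left hω (hg0 t ω)
  have step4 : ∑ t, ∫ ω, g t ω * αt t ω ∂μ ≤ α := by
    rw [← integral_finset_sum _ fun t _ => hint3 t]
    have hconst : ∫ _ω, α ∂μ = α := by simp
    rw [← hconst]
    refine integral_mono_ae (integrable_finset_sum _ fun t _ => hint3 t)
      (integrable_const α) ?_
    filter_upwards [hinv] with ω hω
    have huniv : Finset.univ.filter (· ≤ Fin.last T) = (Finset.univ : Finset (Fin (T + 1))) :=
      Finset.filter_true_of_mem fun t _ => Fin.le_last t
    have hinv' : ∑ t, αt t ω ≤ α * D ω := by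
      have := hω (Fin.last T)
      rwa [huniv] at this
    calc ∑ t, g t ω * αt t ω ≤ ∑ t, αt t ω / D ω :=
          Finset.sum_le_sum fun t _ => key2 t ω
      _ = (∑ t, αt t ω) / D ω := (Finset.sum_div _ _ _).symm
      _ ≤ α := by
          rw [div_le_iff₀ (hDpos ω)]
          linarith [hinv']
  calc ∫ ω, (∑ t, if S t ω then Mt t ω else 0) / D ω ∂μ
      = ∑ t, ∫ ω, (if S t ω then Mt t ω else 0) / D ω ∂μ := step1
    _ ≤ ∑ t, ∫ ω, g t ω * Mt t ω ∂μ := Finset.sum_le_sum fun t _ => step2 t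
    _ ≤ ∑ t, ∫ ω, g t ω * αt t ω ∂μ := Finset.sum_le_sum fun t _ => step3 t
    _ ≤ α := step4
end

section
/- Abstract FCR bound for LORD-type invariants: Let S_0,...,S_T ∈ {0,1} and α_0,...,α_T ∈ (0,1) be random variables such that (i) for each t, E[M_t | G_t] ≤ α_t almost surely for some sigma-algebra G_t with respect to which α_t and (S_0,...,S_T) are measurable, where M_t ∈ {0,1}; and (ii) ∑_{t=0}^T α_t ≤ α · max(1, ∑_{t=0}^T S_t) almost surely. Suppose additionally S_t M_t / max(1, ∑_j S_j) ≤ M_t / ∑_j S_j^{(t)} pointwise, where S^{(t)} is S with the t-th coordinate set to 1. Then E[∑_{t=0}^T S_t M_t / max(1, ∑_{j=0}^T S_j)] ≤ α. -/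
open MeasureTheory

private lemma bdd_integrable {Ω : Type*} [MeasurableSpace Ω] {μ : Measure Ω} [IsFiniteMeasure μ]
    {f : Ω → ℝ} (hf : AEStronglyMeasurable f μ) {C : ℝ} (h : ∀ ω, |f ω| ≤ C) :
    Integrable f μ :=
  ⟨hf, HasFiniteIntegral.of_bounded (Filter.Eventually.of_forall h)⟩

/-- **Abstract FCR bound for LORD-type invariants.** `S t ∈ {0,1}` are selections,
`M t ∈ {0,1}` miscoverage indicators, `αt t ∈ (0,1)` the spent error budget with
`E[M_t ∣ G_t] ≤ α_t` a.s. for a sigma-algebra `G_t` w.r.t. which `α_t` and all the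
`S_j` are measurable; the invariant `∑ α_t ≤ α · max(1, ∑ S_t)` holds a.s.; and
pointwise `S_t M_t / max(1, ∑_j S_j) ≤ M_t / ∑_j S_j^{(t)}`, where `S^{(t)}` is `S`
with its `t`-th coordinate set to `1`.  Then the FCR is at most `α`. -/
theorem abstract_lord_FCR_bound
    {Ω : Type*} [m0 : MeasurableSpace Ω] (μ : Measure Ω) [IsProbabilityMeasure μ]
    (T : ℕ) (S M αt : Fin (T + 1) → Ω → ℝ)
    (G : Fin (T + 1) → MeasurableSpace Ω) (hG : ∀ t, G t ≤ m0)
    (hSmeas : ∀ t, Measurable (S t)) (hMmeas : ∀ t, Measurable (M t))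
    (hS01 : ∀ t ω, S t ω = 0 ∨ S t ω = 1) (hM01 : ∀ t ω, M t ω = 0 ∨ M t ω = 1)
    (hα01 : ∀ t ω, αt t ω ∈ Set.Ioo (0 : ℝ) 1)
    (hαG : ∀ t, Measurable[G t] (αt t)) (hSG : ∀ t j, Measurable[G t] (S j))
    (hcond : ∀ t, (μ[M t | G t]) ≤ᵐ[μ] αt t)
    (α : ℝ)
    (hinv : ∀ᵐ ω ∂μ, ∑ t, αt t ω ≤ α * max 1 (∑ t, S t ω))
    (hpt : ∀ (t : Fin (T + 1)) ω,
      S t ω * M t ω / max 1 (∑ j, S j ω) ≤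
        M t ω / (∑ j, if j = t then 1 else S j ω)) :
    ∫ ω, (∑ t, S t ω * M t ω) / max 1 (∑ j, S j ω) ∂μ ≤ α := by
  classical
  set D : Fin (T + 1) → Ω → ℝ := fun t ω => ∑ j, if j = t then 1 else S j ω with hDdef
  have hS0 : ∀ t ω, 0 ≤ S t ω := fun t ω => by rcases hS01 t ω with h | h <;> simp [h]
  have hS1 : ∀ t ω, S t ω ≤ 1 := fun t ω => by rcases hS01 t ω with h | h <;> simp [h]
  have hM0 : ∀ t ω, 0 ≤ M t ω := fun t ω => by rcases hM01 t ω with h | h <;> simp [h]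
  have hM1 : ∀ t ω, M t ω ≤ 1 := fun t ω => by rcases hM01 t ω with h | h <;> simp [h]
  have hD1 : ∀ t ω, 1 ≤ D t ω := by
    intro t ω
    have := Finset.single_le_sum (f := fun j => if j = t then (1 : ℝ) else S j ω)
      (fun j _ => by by_cases h : j = t <;> simp [h] <;> exact hS0 j ω) (Finset.mem_univ t)
    simpa using this
  have hDpos : ∀ t ω, 0 < D t ω := fun t ω => lt_of_lt_of_le one_pos (hD1 t ω)
  have hDmax : ∀ t ω, max 1 (∑ j, S j ω) ≤ D t ω := by
    intro t ω
    refine max_le (hD1 t ω) (Finset.sum_le_sum fun j _ => ?_)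
    split
    · exact hS1 j ω
    · exact le_rfl
  have hmaxpos : ∀ ω, (0 : ℝ) < max 1 (∑ j, S j ω) := fun ω =>
    lt_of_lt_of_le one_pos (le_max_left _ _)
  have hDmeasG : ∀ t, Measurable[G t] (D t) := by
    intro t
    refine Finset.measurable_sum _ fun j _ => ?_
    by_cases h : j = t
    · simp only [h, if_pos rfl]; exact measurable_const
    · simp only [if_neg h]; exact hSG t j
  have hDmeas : ∀ t, Measurable (D t) := fun t => (hDmeasG t).mono (hG t) le_rfl
  have hginvle : ∀ t ω, (D t ω)⁻¹ ≤ 1 := fun t ω =>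
    inv_le_one_of_one_le₀ (hD1 t ω)
  have hginv0 : ∀ t ω, 0 ≤ (D t ω)⁻¹ := fun t ω => (inv_pos.mpr (hDpos t ω)).le
  -- integrability facts
  have hintM : ∀ t, Integrable (M t) μ := fun t =>
    bdd_integrable (hMmeas t).aestronglyMeasurable (C := 1)
      (fun ω => abs_le.mpr ⟨by linarith [hM0 t ω], hM1 t ω⟩)
  have hintgM : ∀ t, Integrable (fun ω => (D t ω)⁻¹ * M t ω) μ := fun t =>
    bdd_integrable (((hDmeas t).inv.mul (hMmeas t)).aestronglyMeasurable) (C := 1)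
      (fun ω => abs_le.mpr ⟨by nlinarith [hginv0 t ω, hM0 t ω],
        by nlinarith [hginvle t ω, hginv0 t ω, hM1 t ω, hM0 t ω]⟩)
  have hαmeas : ∀ t, Measurable (αt t) := fun t => (hαG t).mono (hG t) le_rfl
  have hintgα : ∀ t, Integrable (fun ω => (D t ω)⁻¹ * αt t ω) μ := fun t =>
    bdd_integrable (((hDmeas t).inv.mul (hαmeas t)).aestronglyMeasurable) (C := 1)
      (fun ω => abs_le.mpr ⟨by nlinarith [hginv0 t ω, (hα01 t ω).1.le],
        by nlinarith [hginvle t ω, hginv0 t ω, (hα01 t ω).2.le, (hα01 t ω).1.le]⟩)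
  have hintLHS : Integrable (fun ω => (∑ t, S t ω * M t ω) / max 1 (∑ j, S j ω)) μ := by
    refine bdd_integrable ?_ (C := (T + 1 : ℝ)) ?_
    · exact ((Finset.measurable_sum _ fun t _ => (hSmeas t).mul (hMmeas t)).div
        (measurable_const.max (Finset.measurable_sum _ fun j _ => hSmeas j))).aestronglyMeasurable
    · intro ω
      have h1 : (0 : ℝ) ≤ ∑ t, S t ω * M t ω :=
        Finset.sum_nonneg fun t _ => mul_nonneg (hS0 t ω) (hM0 t ω)
      have h2 : (∑ t, S t ω * M t ω) ≤ (T + 1 : ℝ) := by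
        calc (∑ t, S t ω * M t ω) ≤ ∑ _t : Fin (T + 1), (1 : ℝ) :=
              Finset.sum_le_sum fun t _ => by nlinarith [hS0 t ω, hS1 t ω, hM0 t ω, hM1 t ω]
          _ = (T + 1 : ℝ) := by simp
      have hmax := hmaxpos ω
      rw [abs_div, abs_of_nonneg h1, abs_of_pos hmax]
      calc (∑ t, S t ω * M t ω) / max 1 (∑ j, S j ω) ≤ (T + 1 : ℝ) / 1 :=
            div_le_div₀ (by positivity) h2 one_pos (le_max_left _ _)
        _ = (T + 1 : ℝ) := by ring
  -- Step 2: conditional expectation bound, per t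
  have key : ∀ t, ∫ ω, (D t ω)⁻¹ * M t ω ∂μ ≤ ∫ ω, (D t ω)⁻¹ * αt t ω ∂μ := by
    intro t
    haveI : SigmaFinite (μ.trim (hG t)) := IsFiniteMeasure.toSigmaFinite _
    have hgSM : StronglyMeasurable[G t] (fun ω => (D t ω)⁻¹) :=
      ((hDmeasG t).inv).stronglyMeasurable
    have hpull := condExp_mul_of_stronglyMeasurable_left (m := G t) (μ := μ) hgSM
      (f := fun ω => (D t ω)⁻¹) (g := M t) (hintgM t) (hintM t)
    calc ∫ ω, (D t ω)⁻¹ * M t ω ∂μ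
        = ∫ ω, (μ[(fun ω => (D t ω)⁻¹) * M t | G t]) ω ∂μ := by
          rw [integral_condExp (hG t)]; rfl
      _ = ∫ ω, (D t ω)⁻¹ * (μ[M t | G t]) ω ∂μ := integral_congr_ae hpull
      _ ≤ ∫ ω, (D t ω)⁻¹ * αt t ω ∂μ := by
          refine integral_mono_ae ?_ (hintgα t) ?_
          · exact (integrable_condExp.bdd_mul (c := 1)
              ((hDmeas t).inv).aestronglyMeasurable
              (Filter.Eventually.of_forall fun ω => by rw [Real.norm_eq_abs, abs_of_nonneg (hginv0 t ω)]; exact hginvle t ω))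
          · filter_upwards [hcond t] with ω hω
            exact mul_le_mul_of_nonneg_left hω (hginv0 t ω)
  -- assemble
  calc ∫ ω, (∑ t, S t ω * M t ω) / max 1 (∑ j, S j ω) ∂μ
      ≤ ∫ ω, ∑ t, (D t ω)⁻¹ * M t ω ∂μ := by
        refine integral_mono hintLHS (integrable_finset_sum _ fun t _ => hintgM t) fun ω => ?_
        rw [Finset.sum_div]
        refine Finset.sum_le_sum fun t _ => ?_
        calc S t ω * M t ω / max 1 (∑ j, S j ω) ≤ M t ω / D t ω := hpt t ω
          _ = (D t ω)⁻¹ * M t ω := by rw [div_eq_inv_mul]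
    _ = ∑ t, ∫ ω, (D t ω)⁻¹ * M t ω ∂μ := integral_finset_sum _ fun t _ => hintgM t
    _ ≤ ∑ t, ∫ ω, (D t ω)⁻¹ * αt t ω ∂μ := Finset.sum_le_sum fun t _ => key t
    _ = ∫ ω, ∑ t, (D t ω)⁻¹ * αt t ω ∂μ := (integral_finset_sum _ fun t _ => hintgα t).symm
    _ ≤ ∫ _ω, α ∂μ := by
        refine integral_mono_ae (integrable_finset_sum _ fun t _ => hintgα t)
          (integrable_const _) ?_
        filter_upwards [hinv] with ω hω
        have hmax := hmaxpos ω
        calc ∑ t, (D t ω)⁻¹ * αt t ω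
            ≤ ∑ t, αt t ω / max 1 (∑ j, S j ω) := by
              refine Finset.sum_le_sum fun t _ => ?_
              rw [← div_eq_inv_mul, div_le_div_iff₀ (hDpos t ω) hmax]
              exact mul_le_mul_of_nonneg_left (hDmax t ω) (hα01 t ω).1.le
          _ = (∑ t, αt t ω) / max 1 (∑ j, S j ω) := (Finset.sum_div _ _ _).symm
          _ ≤ α := by
              rw [div_le_iff₀ hmax]
              exact hω
    _ = α := by simp
end

section
/- For the ACI update α_t = α_{t-1} + γ(α − M_{t-1}) with step size γ > 0, where M_{t-1} = 1{Y_{t-1} ∉ Ĉ_{t-1}(X_{t-1}, α_{t-1})} ∈ {0,1}, assume that α_t ∈ [−γ, 1+γ] for all t (which follows inductively from α_1 ∈ [0,1]). Then for all T ≥ 1, |(1/T) ∑_{t=1}^T M_t − α| ≤ (max(α_1, 1−α_1) + γ)/(Tγ) almost surely. -/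
/-- **ACI deterministic miscoverage bound.** For the ACI update
`α_{t+1} = α_t + γ(α − M_t)` with step size `γ > 0`, `M_t ∈ {0,1}`, and the a priori
bound `α_t ∈ [−γ, 1+γ]` for all `t ≥ 1`, we have, for all `T ≥ 1`,
`|(1/T) ∑_{t=1}^T M_t − α| ≤ (max(α_1, 1−α_1) + γ)/(Tγ)`. -/
theorem aci_miscoverage_bound (γ α : ℝ) (hγ : 0 < γ)
    (M : ℕ → ℝ) (hM : ∀ t, M t = 0 ∨ M t = 1)
    (a : ℕ → ℝ)
    (hrec : ∀ t, 1 ≤ t → a (t + 1) = a t + γ * (α - M t))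
    (hbnd : ∀ t, 1 ≤ t → a t ∈ Set.Icc (-γ) (1 + γ)) :
    ∀ T : ℕ, 1 ≤ T →
      |(1 / (T : ℝ)) * (∑ t ∈ Finset.Icc 1 T, M t) - α| ≤
        (max (a 1) (1 - a 1) + γ) / ((T : ℝ) * γ) := by
  have tel : ∀ T : ℕ, 1 ≤ T →
      a (T + 1) = a 1 + γ * ∑ t ∈ Finset.Icc 1 T, (α - M t) := by
    intro T hT
    induction T with
    | zero => omega
    | succ n ih =>
      rcases Nat.eq_or_lt_of_le hT with h | h
      · simp [← h, hrec 1 le_rfl]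
      · have hn : 1 ≤ n := by omega
        rw [hrec (n + 1) (by omega), ih hn,
          Finset.sum_Icc_succ_top (by omega : 1 ≤ n + 1)]
        ring
  intro T hT
  have hTpos : (0 : ℝ) < T := by exact_mod_cast hT
  have key : ∑ t ∈ Finset.Icc 1 T, M t - T * α = (a 1 - a (T + 1)) / γ := by
    have h := tel T hT
    have hc : (Finset.Icc 1 T).card = T := by simp
    rw [h]
    field_simp
    simp only [Finset.sum_sub_distrib, Finset.sum_const, hc, nsmul_eq_mul]
    ring
  have h1 := hbnd 1 le_rfl
  have h2 := hbnd (T + 1) (by omega)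
  simp only [Set.mem_Icc] at h1 h2
  have habs : |a 1 - a (T + 1)| ≤ max (a 1) (1 - a 1) + γ := by
    rw [abs_le]
    constructor
    · have : a (T + 1) - a 1 ≤ (1 - a 1) + γ := by linarith [h2.2]
      have h' : (1 - a 1) ≤ max (a 1) (1 - a 1) := le_max_right _ _
      linarith
    · have : a 1 - a (T + 1) ≤ a 1 + γ := by linarith [h2.1]
      have h' : a 1 ≤ max (a 1) (1 - a 1) := le_max_left _ _
      linarith
  have heq : (1 / (T : ℝ)) * (∑ t ∈ Finset.Icc 1 T, M t) - α
      = (a 1 - a (T + 1)) / (T * γ) := by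
    rw [show (a 1 - a (T+1)) / ((T:ℝ) * γ) = ((a 1 - a (T+1)) / γ) / T by
      rw [div_div]; ring_nf, ← key]
    field_simp
  rw [heq, abs_div, abs_of_pos (by positivity : (0:ℝ) < (T:ℝ) * γ)]
  exact div_le_div_of_nonneg_right habs (by positivity) |>.trans_eq rfl
end

section
/- Under the ACI update α_t = α_{t-1} + γ(α − M_{t-1}) with M_t ∈ {0,1} and γ > 0, if α_1 ∈ [0,1] then α_t ∈ [−γ, 1+γ] for all t ≥ 1. -/
/-- **A priori bound for the ACI recursion.** Under the ACI update
`α_{t+1} = α_t + γ(α − M_t)` with `M_t ∈ {0,1}`, `γ > 0`, `α ∈ (0,1)`,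
`M_t = 0` whenever `α_t ≤ 0` (the interval is the whole space) and `M_t = 1`
whenever `α_t ≥ 1` (the interval is empty), if `α_1 ∈ [0,1]` then
`α_t ∈ [−γ, 1+γ]` for all `t ≥ 1`. -/
theorem aci_a_priori_bound (γ α : ℝ) (hγ : 0 < γ) (hα : α ∈ Set.Ioo (0 : ℝ) 1)
    (M : ℕ → ℝ) (hM : ∀ t, M t = 0 ∨ M t = 1)
    (a : ℕ → ℝ)
    (hrec : ∀ t, 1 ≤ t → a (t + 1) = a t + γ * (α - M t))
    (hM0 : ∀ t, 1 ≤ t → a t ≤ 0 → M t = 0)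
    (hM1 : ∀ t, 1 ≤ t → 1 ≤ a t → M t = 1)
    (h1 : a 1 ∈ Set.Icc (0 : ℝ) 1) :
    ∀ t, 1 ≤ t → a t ∈ Set.Icc (-γ) (1 + γ) := by
  obtain ⟨hα0, hα1⟩ := hα
  intro t ht
  induction t with
  | zero => omega
  | succ t ih =>
    rcases Nat.eq_or_lt_of_le ht with h | h
    · simp only [← h]
      exact ⟨by linarith [h1.1], by linarith [h1.2]⟩
    · have ht1 : 1 ≤ t := by omega
      obtain ⟨ihl, ihr⟩ := ih ht1
      rw [hrec t ht1]
      rcases le_or_gt (a t) 0 with h0 | h0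
      · rw [hM0 t ht1 h0]
        constructor <;> nlinarith
      · rcases le_or_gt 1 (a t) with h1' | h1'
        · rw [hM1 t ht1 h1']
          constructor <;> nlinarith
        · rcases hM t with hm | hm <;> rw [hm] <;>
            constructor <;> nlinarith
end

section
/- Counterexample structure for the adaptive strategy (ADA): Let t > s ≥ 0 and let π be the transposition swapping s and t. Suppose j ∈ {0,...,t-1}, j ≠ s, is selected into the ADA calibration set at time t, i.e., S_t(X_j)·1{S_j(X_j) = S_j(X_t)} = 1, and that S_s(X_s) = S_s(X_t) (so s is also in the calibration set). Even if the permuted rule sequence equals the original rule sequence, the symmetry condition for ADA requires S_j(X_{π(j)}) = S_j(X_{π(t)}), i.e., S_j(X_j) = S_j(X_s); there exist decision-driven rule sequences and data for which S_j(X_j) = S_j(X_t) holds but S_j(X_j) = S_j(X_s) fails, so ADA does not satisfy the symmetry condition (S) in general. -/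
/-- The augmented ADA calibration set at time `t`: an online index `j < t` is selected
iff `S_t(x_j) = 1` and `S_j(x_j) = S_j(x_t)`; the test index `t` belongs to the set iff
`S_t(x_t) = 1`. -/
def adaSet (g : (t : ℕ) → (Fin t → Bool) → ℕ → Bool) (x : ℕ → ℕ) (t : ℕ) : Set ℕ :=
  {j | (j < t ∧ rules g x t (x j) = true ∧ rules g x j (x j) = rules g x j (x t)) ∨
    (j = t ∧ rules g x t (x t) = true)}

/-- **ADA does not satisfy the symmetry condition (S).** There exist a decision-driven
rule mechanism, data, indices `s < t`, and an online index `j` selected by ADA at time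
`t` (so `S_t(x_j) = 1` and `S_j(x_j) = S_j(x_t)`), with `s` also in the calibration set
(`S_s(x_s) = S_s(x_t)`), such that `S_j(x_j) ≠ S_j(x_s)`; consequently, the ADA
calibration set is not invariant under the transposition swapping `s` and `t`. -/
theorem ada_not_symmetric :
    ∃ (g : (t : ℕ) → (Fin t → Bool) → ℕ → Bool) (x : ℕ → ℕ) (s t j : ℕ),
      s < t ∧ j < t ∧ j ≠ s ∧
      s ∈ adaSet g x t ∧ t ∈ adaSet g x t ∧
      rules g x t (x j) = true ∧ rules g x j (x j) = rules g x j (x t) ∧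
      rules g x s (x s) = rules g x s (x t) ∧
      rules g x j (x j) ≠ rules g x j (x s) ∧
      adaSet g (fun i => x (Equiv.swap s t i)) t ≠ adaSet g x t := by
  refine ⟨(fun t _ n => !(t == 1 && n == 0)), id, 0, 2, 1, ?_⟩
  have hr : ∀ (x : ℕ → ℕ) (t y : ℕ),
      rules (fun t _ n => !(t == 1 && n == 0)) x t y = !(t == 1 && y == 0) := by
    intro x t y; rw [rules]
  refine ⟨by norm_num, by norm_num, by decide, ?_, ?_, ?_, ?_, ?_, ?_, ?_⟩
  · exact Or.inl ⟨by norm_num, by simp only [hr]; decide, by simp only [hr]; decide⟩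
  · exact Or.inr ⟨rfl, by simp only [hr]; decide⟩
  · simp only [hr]; decide
  · simp only [hr]; decide
  · simp only [hr]; decide
  · simp only [hr]; decide
  · intro h
    have h1 : (1 : ℕ) ∈ adaSet (fun t _ n => !(t == 1 && n == 0))
        (fun i => id (Equiv.swap 0 2 i)) 2 := by
      rw [h]
      exact Or.inl ⟨by norm_num, by simp only [hr]; decide, by simp only [hr]; decide⟩
    rcases h1 with ⟨_, _, h2⟩ | ⟨h2, _⟩
    · simp only [hr] at h2; exact absurd h2 (by decide)
    · exact absurd h2 (by decide)
end
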